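/- arXiv:1611.06337 — 4 statements merged into one kernel-verified Lean document; each statement's English description precedes it below -/
import Mathlib

section
/- Let $a,b\in\mathcal W_1$, i.e. $\sum_k|a_k|<\infty$ and $\sum_k|k\,a_k|<\infty$ (and similarly for $b$). Then the matrix $E_c=-H(a^-)H(b^+)$ satisfying $T(a)T(b)=T(ab)+E_c$ lies in $\mathcal F$, with $\|E_c\|_{\mathcal F}\le\Big(\sum_{k\ge1}k|a_{-k}|\Big)\Big(\sum_{k\ge1}k|b_k|\Big)$. -/
open scoped ENNReal NNReal

noncomputable section

def FNorm (F : ℕ → ℕ → ℂ) : ℝ := ∑' p : ℕ × ℕ, ‖F p.1 p.2‖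

def MemF (F : ℕ → ℕ → ℂ) : Prop := Summable fun p : ℕ × ℕ => ‖F p.1 p.2‖

def matMul (E F : ℕ → ℕ → ℂ) : ℕ → ℕ → ℂ := fun i j => ∑' r : ℕ, E i r * F r j

def Toep (a : ℤ → ℂ) : ℕ → ℕ → ℂ := fun i j => a ((j : ℤ) - (i : ℤ))

/-- Hankel matrix of `a⁻`: entries `a_{-(i+j-1)}` (0-based indices). -/
def HankM (a : ℤ → ℂ) : ℕ → ℕ → ℂ := fun i j => a (-((i : ℤ) + (j : ℤ) + 1))

/-- Hankel matrix of `b⁺`: entries `b_{i+j-1}` (0-based indices). -/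
def HankP (b : ℤ → ℂ) : ℕ → ℕ → ℂ := fun i j => b ((i : ℤ) + (j : ℤ) + 1)

/-- counting lemma: `∑_{i,r ≥ 0} φ(i+r+1) = ∑_k k φ(k)` in `ℝ≥0∞`. -/
lemma tsum_prod_shift (φ : ℕ → ℝ≥0∞) :
    ∑' p : ℕ × ℕ, φ (p.1 + p.2 + 1) = ∑' k : ℕ, (k : ℝ≥0∞) * φ k := by
  rw [← Finset.HasAntidiagonal.sigmaAntidiagonalEquivProd.tsum_eq (fun p : ℕ × ℕ => φ (p.1 + p.2 + 1)),
    ENNReal.tsum_sigma']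
  have h1 : ∀ n : ℕ, (∑' x : (Finset.HasAntidiagonal.antidiagonal n : Finset (ℕ × ℕ)),
      φ ((x : ℕ × ℕ).1 + (x : ℕ × ℕ).2 + 1)) = (n + 1 : ℝ≥0∞) * φ (n + 1) := by
    intro n
    have : ∀ x : (Finset.HasAntidiagonal.antidiagonal n : Finset (ℕ × ℕ)),
        φ ((x : ℕ × ℕ).1 + (x : ℕ × ℕ).2 + 1) = φ (n + 1) := by
      rintro ⟨⟨k, l⟩, h⟩
      rw [Finset.HasAntidiagonal.mem_antidiagonal] at h
      simp [h]
    rw [tsum_congr this, Finset.tsum_subtype (Finset.HasAntidiagonal.antidiagonal n) (fun _ => φ (n + 1)),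
      Finset.sum_const, Finset.Nat.card_antidiagonal, nsmul_eq_mul]
    push_cast; ring
  calc (∑' (n : ℕ), ∑' x : (Finset.HasAntidiagonal.antidiagonal n : Finset (ℕ × ℕ)),
        φ ((x : ℕ × ℕ).1 + (x : ℕ × ℕ).2 + 1))
      = ∑' n : ℕ, ((n : ℝ≥0∞) + 1) * φ (n + 1) := by
        refine tsum_congr fun n => ?_; rw [h1 n]
    _ = ∑' k : ℕ, (k : ℝ≥0∞) * φ k := by
        conv_rhs => rw [tsum_eq_zero_add' ENNReal.summable]
        simp [Nat.cast_add]

/-- For `a, b ∈ 𝒲₁`, the correction `E_c = -H(a⁻)H(b⁺)` with `T(a)T(b) = T(ab) + E_c`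
belongs to `𝓕` and `‖E_c‖_𝓕 ≤ (∑_{k≥1} k|a_{-k}|)(∑_{k≥1} k|b_k|)`. -/
theorem stmt7 (a b : ℤ → ℂ)
    (ha : Summable fun k : ℤ => ‖a k‖)
    (ha1 : Summable fun k : ℤ => |(k : ℝ)| * ‖a k‖)
    (hb : Summable fun k : ℤ => ‖b k‖)
    (hb1 : Summable fun k : ℤ => |(k : ℝ)| * ‖b k‖)
    (c : ℤ → ℂ) (hc : ∀ k : ℤ, c k = ∑' m : ℤ, a m * b (k - m)) :
    (∀ i j, matMul (Toep a) (Toep b) i j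
      = Toep c i j + (-(matMul (HankM a) (HankP b) i j))) ∧
    MemF (fun i j => -(matMul (HankM a) (HankP b) i j)) ∧
    FNorm (fun i j => -(matMul (HankM a) (HankP b) i j))
      ≤ (∑' k : ℕ, (k : ℝ) * ‖a (-(k : ℤ))‖)
        * ∑' k : ℕ, (k : ℝ) * ‖b (k : ℤ)‖ := by
  -- Part 1 : the pointwise identity
  have part1 : ∀ i j, matMul (Toep a) (Toep b) i j
      = Toep c i j + (-(matMul (HankM a) (HankP b) i j)) := by
    intro i j
    set f : ℤ → ℂ := fun r => a (r - (i : ℤ)) * b ((j : ℤ) - r) with hf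
    have hfs : Summable f := by
      apply Summable.of_norm
      have hle : ∀ r : ℤ, ‖f r‖ ≤ ‖a (r - (i : ℤ))‖ * ∑' k : ℤ, ‖b k‖ := by
        intro r
        rw [hf]
        simp only [norm_mul]
        refine mul_le_mul_of_nonneg_left ?_ (norm_nonneg _)
        exact hb.le_tsum ((j : ℤ) - r) fun _ _ => norm_nonneg _
      refine Summable.of_nonneg_of_le (fun r => norm_nonneg _) hle ?_
      exact (ha.comp_injective (Equiv.subRight (i : ℤ)).injective).mul_right _
    have h1 : Summable fun n : ℕ => f n := hfs.comp_injective (fun m n h => Int.ofNat_inj.mp h)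
    have hinj : Function.Injective (fun n : ℕ => -((n : ℤ) + 1)) := by
      intro m n h
      simp only [neg_inj, add_left_inj, Nat.cast_inj] at h
      exact h
    have h2 : Summable fun n : ℕ => f (-((n : ℤ) + 1)) := hfs.comp_injective hinj
    have hkey : HasSum f ((∑' n : ℕ, f n) + ∑' n : ℕ, f (-((n : ℤ) + 1))) :=
      HasSum.of_nat_of_neg_add_one h1.hasSum h2.hasSum
    have hTc : Toep c i j = ∑' z : ℤ, f z := by
      show c ((j : ℤ) - (i : ℤ)) = _
      rw [hc]
      rw [← (Equiv.subRight (i : ℤ)).tsum_eq (fun m => a m * b ((j : ℤ) - (i : ℤ) - m))]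
      refine tsum_congr fun r => ?_
      simp only [Equiv.subRight_apply, hf]
      have : (j : ℤ) - (i : ℤ) - (r - (i : ℤ)) = (j : ℤ) - r := by ring
      rw [this]
    have hT : matMul (Toep a) (Toep b) i j = ∑' n : ℕ, f n := by
      refine tsum_congr fun r => ?_
      simp only [Toep, hf]
    have hH : matMul (HankM a) (HankP b) i j = ∑' n : ℕ, f (-((n : ℤ) + 1)) := by
      refine tsum_congr fun r => ?_
      simp only [HankM, HankP, hf]
      have e1 : -((r : ℤ) + 1) - (i : ℤ) = -((i : ℤ) + (r : ℤ) + 1) := by ring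
      have e2 : (j : ℤ) - -((r : ℤ) + 1) = (r : ℤ) + (j : ℤ) + 1 := by ring
      rw [e1, e2]
    rw [hT, hTc, hkey.tsum_eq, hH]
    ring
  -- weighted summability in ℝ≥0
  have hA : Summable fun k : ℕ => ((k : ℝ≥0) * ‖a (-(k : ℤ))‖₊) := by
    rw [← NNReal.summable_coe]
    have hinj : Function.Injective (fun k : ℕ => -(k : ℤ)) := by
      intro m n h
      simp only [neg_inj, Nat.cast_inj] at h
      exact h
    have := ha1.comp_injective hinj
    refine this.congr fun k => ?_
    simp [Function.comp, abs_of_nonneg]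
  have hB : Summable fun k : ℕ => ((k : ℝ≥0) * ‖b (k : ℤ)‖₊) := by
    rw [← NNReal.summable_coe]
    have := hb1.comp_injective (fun m n h => Int.ofNat_inj.mp h : Function.Injective ((↑) : ℕ → ℤ))
    refine this.congr fun k => ?_
    simp [Function.comp]
  set α : ℕ → ℝ≥0∞ := fun k => (‖a (-(k : ℤ))‖₊ : ℝ≥0∞) with hα
  set β : ℕ → ℝ≥0∞ := fun k => (‖b (k : ℤ)‖₊ : ℝ≥0∞) with hβ
  set Sa : ℝ≥0∞ := ∑' k : ℕ, (k : ℝ≥0∞) * α k with hSa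
  set Sb : ℝ≥0∞ := ∑' k : ℕ, (k : ℝ≥0∞) * β k with hSb
  have hSa_coe : Sa = ((∑' k : ℕ, ((k : ℝ≥0) * ‖a (-(k : ℤ))‖₊)) : ℝ≥0) := by
    rw [hSa, ENNReal.coe_tsum hA]
    refine tsum_congr fun k => ?_
    simp [hα, ENNReal.coe_mul]
  have hSb_coe : Sb = ((∑' k : ℕ, ((k : ℝ≥0) * ‖b (k : ℤ)‖₊)) : ℝ≥0) := by
    rw [hSb, ENNReal.coe_tsum hB]
    refine tsum_congr fun k => ?_
    simp [hβ, ENNReal.coe_mul]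
  have hSa_ne : Sa ≠ ⊤ := by rw [hSa_coe]; exact ENNReal.coe_ne_top
  have hSb_ne : Sb ≠ ⊤ := by rw [hSb_coe]; exact ENNReal.coe_ne_top
  have hmul_ne : Sa * Sb ≠ ⊤ := ENNReal.mul_ne_top hSa_ne hSb_ne
  have hSa_toReal : Sa.toReal = ∑' k : ℕ, (k : ℝ) * ‖a (-(k : ℤ))‖ := by
    rw [hSa_coe, ENNReal.coe_toReal, NNReal.coe_tsum]
    refine tsum_congr fun k => ?_
    simp
  have hSb_toReal : Sb.toReal = ∑' k : ℕ, (k : ℝ) * ‖b (k : ℤ)‖ := by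
    rw [hSb_coe, ENNReal.coe_toReal, NNReal.coe_tsum]
    refine tsum_congr fun k => ?_
    simp
  set G : ℕ × ℕ → ℝ≥0∞ :=
    fun p => ∑' r : ℕ, (‖HankM a p.1 r * HankP b r p.2‖₊ : ℝ≥0∞) with hG
  have hxy : ∀ i r j : ℕ, (‖HankM a i r * HankP b r j‖₊ : ℝ≥0∞)
      = α (i + r + 1) * β (r + j + 1) := by
    intro i r j
    have e1 : (-((i : ℤ) + (r : ℤ) + 1)) = -((i + r + 1 : ℕ) : ℤ) := by push_cast; ring
    have e2 : ((r : ℤ) + (j : ℤ) + 1) = ((r + j + 1 : ℕ) : ℤ) := by push_cast; ring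
    rw [nnnorm_mul, ENNReal.coe_mul, HankM, HankP, e1, e2]
  have hGsum : ∑' p : ℕ × ℕ, G p ≤ Sa * Sb := by
    have hGrw : ∑' p : ℕ × ℕ, G p = ∑' i : ℕ, ∑' r : ℕ, α (i + r + 1) * ∑' j : ℕ, β (r + j + 1) := by
      rw [ENNReal.tsum_prod']
      refine tsum_congr fun i => ?_
      rw [ENNReal.tsum_comm]
      refine tsum_congr fun r => ?_
      rw [← ENNReal.tsum_mul_left]
      exact tsum_congr fun j => hxy i r j
    rw [hGrw]
    have hfiber : ∀ r : ℕ, ∑' j : ℕ, β (r + j + 1) ≤ Sb := by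
      intro r
      have : ∑' j : ℕ, β (r + j + 1) ≤ ∑' q : ℕ × ℕ, β (q.1 + q.2 + 1) := by
        rw [ENNReal.tsum_prod']
        exact ENNReal.le_tsum r
      rwa [tsum_prod_shift β] at this
    calc ∑' i : ℕ, ∑' r : ℕ, α (i + r + 1) * ∑' j : ℕ, β (r + j + 1)
        ≤ ∑' i : ℕ, ∑' r : ℕ, α (i + r + 1) * Sb := by
          gcongr with i r
          exact hfiber r
      _ = (∑' p : ℕ × ℕ, α (p.1 + p.2 + 1)) * Sb := by
          rw [ENNReal.tsum_prod']
          rw [← ENNReal.tsum_mul_right]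
          exact tsum_congr fun i => by rw [← ENNReal.tsum_mul_right]
      _ = Sa * Sb := by rw [tsum_prod_shift α]
  have hGtop : ∀ p : ℕ × ℕ, G p ≠ ⊤ :=
    fun p => ne_top_of_le_ne_top hmul_ne ((ENNReal.le_tsum p).trans hGsum)
  have hw : ∀ p : ℕ × ℕ, Summable fun r : ℕ => ‖HankM a p.1 r * HankP b r p.2‖₊ :=
    fun p => ENNReal.tsum_coe_ne_top_iff_summable.mp (hGtop p)
  have hwR : ∀ p : ℕ × ℕ, Summable fun r : ℕ => ‖HankM a p.1 r * HankP b r p.2‖ := by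
    intro p
    have := NNReal.summable_coe.mpr (hw p)
    simpa only [coe_nnnorm] using this
  have hGtoReal : ∀ p : ℕ × ℕ, (G p).toReal = ∑' r : ℕ, ‖HankM a p.1 r * HankP b r p.2‖ := by
    intro p
    show (∑' r : ℕ, (‖HankM a p.1 r * HankP b r p.2‖₊ : ℝ≥0∞)).toReal = _
    rw [← ENNReal.coe_tsum (hw p), ENNReal.coe_toReal, NNReal.coe_tsum]
    exact tsum_congr fun r => coe_nnnorm _
  have hEbound : ∀ p : ℕ × ℕ,
      ‖-(matMul (HankM a) (HankP b) p.1 p.2)‖ ≤ (G p).toReal := by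
    intro p
    rw [norm_neg, hGtoReal p]
    calc ‖matMul (HankM a) (HankP b) p.1 p.2‖
        = ‖∑' r : ℕ, HankM a p.1 r * HankP b r p.2‖ := by rfl
      _ ≤ ∑' r : ℕ, ‖HankM a p.1 r * HankP b r p.2‖ := norm_tsum_le_tsum_norm (hwR p)
  have hGr : Summable fun p : ℕ × ℕ => (G p).toReal :=
    ENNReal.summable_toReal (ne_top_of_le_ne_top hmul_ne hGsum)
  have memF : MemF (fun i j => -(matMul (HankM a) (HankP b) i j)) :=
    Summable.of_nonneg_of_le (fun p => norm_nonneg _) hEbound hGr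
  refine ⟨part1, memF, ?_⟩
  calc FNorm (fun i j => -(matMul (HankM a) (HankP b) i j))
      ≤ ∑' p : ℕ × ℕ, (G p).toReal := Summable.tsum_le_tsum hEbound memF hGr
    _ = (∑' p : ℕ × ℕ, G p).toReal := (ENNReal.tsum_toReal_eq hGtop).symm
    _ ≤ (Sa * Sb).toReal := ENNReal.toReal_mono hmul_ne hGsum
    _ = Sa.toReal * Sb.toReal := ENNReal.toReal_mul
    _ = _ := by rw [hSa_toReal, hSb_toReal]

end
end

section
/- Let $A=T(a)+E_a$ and $B=T(b)+E_b$ be CQT matrices, i.e. $a,b\in\mathcal W_1$ and $E_a,E_b\in\mathcal F$. Then $AB=T(ab)+E_c$ where $E_c=-H(a^-)H(b^+)+T(a)E_b+E_aT(b)+E_aE_b\in\mathcal F$ and $\|E_c\|_{\mathcal F}\le \|(a^-)'\|_{\mathcal W}\|(b^+)'\|_{\mathcal W}+\|a\|_{\mathcal W}\|E_b\|_{\mathcal F}+\|b\|_{\mathcal W}\|E_a\|_{\mathcal F}+\|E_a\|_{\mathcal F}\|E_b\|_{\mathcal F}$. -/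
noncomputable section

def WNorm (a : ℤ → ℂ) : ℝ := ∑' k : ℤ, ‖a k‖

private lemma tsum_if_lt (u : ℕ) (c : ℝ) : ∑' i : ℕ, (if i < u then c else 0) = (u : ℝ) * c := by
  rw [tsum_eq_sum (s := Finset.range u) (f := fun i => if i < u then c else 0)
    (fun b hb => if_neg (by simpa using hb))]
  rw [Finset.sum_congr rfl (fun i hi => if_pos (Finset.mem_range.mp hi)), Finset.sum_const,
    Finset.card_range, nsmul_eq_mul]

private lemma summable_mul_inj {α β γ : Type*} {F : γ → ℝ} {f : α → ℝ} {g : β → ℝ}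
    (hf : Summable f) (hg : Summable g) (hf0 : ∀ x, 0 ≤ f x) (hg0 : ∀ x, 0 ≤ g x)
    (ψ : γ → α × β) (hψ : Function.Injective ψ)
    (hle : ∀ q, F q ≤ f (ψ q).1 * g (ψ q).2) (hF0 : ∀ q, 0 ≤ F q) :
    Summable F ∧ ∑' q, F q ≤ (∑' x, f x) * (∑' y, g y) := by
  have hbase : Summable fun p : α × β => f p.1 * g p.2 := hf.mul_of_nonneg hg hf0 hg0
  have hFs : Summable F := Summable.of_nonneg_of_le hF0 hle (hbase.comp_injective hψ)
  refine ⟨hFs, ?_⟩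
  have h1 := hFs.tsum_le_tsum_of_inj ψ hψ (fun c _ => mul_nonneg (hf0 _) (hg0 _)) hle hbase
  calc ∑' q, F q ≤ ∑' p : α × β, f p.1 * g p.2 := h1
    _ = (∑' x, f x) * ∑' y, g y := by
        rw [Summable.tsum_prod' hbase (fun x => hbase.prod_factor x)]
        simp_rw [tsum_mul_left]
        exact tsum_mul_right

private lemma matMul_bound {X Y : ℕ → ℕ → ℂ}
    (hF : Summable fun q : (ℕ × ℕ) × ℕ => ‖X q.1.1 q.2‖ * ‖Y q.2 q.1.2‖) :
    (∀ i j, Summable fun r : ℕ => X i r * Y r j) ∧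
    (∀ i j, ‖matMul X Y i j‖ ≤ ∑' r : ℕ, ‖X i r‖ * ‖Y r j‖) ∧
    Summable (fun p : ℕ × ℕ => ∑' r : ℕ, ‖X p.1 r‖ * ‖Y r p.2‖) ∧
    (∑' p : ℕ × ℕ, ∑' r : ℕ, ‖X p.1 r‖ * ‖Y r p.2‖)
      = ∑' q : (ℕ × ℕ) × ℕ, ‖X q.1.1 q.2‖ * ‖Y q.2 q.1.2‖ := by
  have hslice : ∀ i j, Summable fun r : ℕ => ‖X i r‖ * ‖Y r j‖ :=
    fun i j => hF.prod_factor (i, j)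
  have hnorm : ∀ i j, Summable fun r : ℕ => ‖X i r * Y r j‖ := fun i j =>
    (hslice i j).congr fun r => by rw [norm_mul]
  refine ⟨fun i j => Summable.of_norm (hnorm i j), fun i j => ?_, ?_,
    (Summable.tsum_prod' hF (fun p => hF.prod_factor p)).symm⟩
  · calc ‖matMul X Y i j‖ = ‖∑' r : ℕ, X i r * Y r j‖ := rfl
      _ ≤ ∑' r : ℕ, ‖X i r * Y r j‖ := norm_tsum_le_tsum_norm (hnorm i j)
      _ = ∑' r : ℕ, ‖X i r‖ * ‖Y r j‖ :=
          tsum_congr fun r => by rw [norm_mul]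
  · exact ((summable_prod_of_nonneg
      (fun q => mul_nonneg (norm_nonneg _) (norm_nonneg _))).mp hF).2

/-- Product of CQT matrices: `A = T(a)+E_a`, `B = T(b)+E_b` with `a, b ∈ 𝒲₁`,
`E_a, E_b ∈ 𝓕`; then `AB = T(ab) + E_c` where
`E_c = -H(a⁻)H(b⁺) + T(a)E_b + E_a T(b) + E_a E_b ∈ 𝓕` and
`‖E_c‖_𝓕 ≤ ‖(a⁻)'‖_W ‖(b⁺)'‖_W + ‖a‖_W ‖E_b‖_𝓕 + ‖b‖_W ‖E_a‖_𝓕 + ‖E_a‖_𝓕 ‖E_b‖_𝓕`. -/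
theorem stmt12 (a b : ℤ → ℂ) (Ea Eb : ℕ → ℕ → ℂ)
    (ha : Summable fun k : ℤ => ‖a k‖)
    (ha1 : Summable fun k : ℤ => |(k : ℝ)| * ‖a k‖)
    (hb : Summable fun k : ℤ => ‖b k‖)
    (hb1 : Summable fun k : ℤ => |(k : ℝ)| * ‖b k‖)
    (hEa : MemF Ea) (hEb : MemF Eb)
    (c : ℤ → ℂ) (hc : ∀ k : ℤ, c k = ∑' m : ℤ, a m * b (k - m)) :
    let A : ℕ → ℕ → ℂ := fun i j => Toep a i j + Ea i j
    let B : ℕ → ℕ → ℂ := fun i j => Toep b i j + Eb i j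
    let Ec : ℕ → ℕ → ℂ := fun i j =>
      -(matMul (HankM a) (HankP b) i j) + matMul (Toep a) Eb i j
        + matMul Ea (Toep b) i j + matMul Ea Eb i j
    MemF Ec ∧
    (∀ i j, matMul A B i j = Toep c i j + Ec i j) ∧
    FNorm Ec ≤ (∑' k : ℕ, (k : ℝ) * ‖a (-(k : ℤ))‖)
        * (∑' k : ℕ, (k : ℝ) * ‖b (k : ℤ)‖)
      + WNorm a * FNorm Eb + WNorm b * FNorm Ea + FNorm Ea * FNorm Eb := by
  intro A B Ec
  have hA : ∀ i j, A i j = Toep a i j + Ea i j := fun _ _ => rfl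
  have hB : ∀ i j, B i j = Toep b i j + Eb i j := fun _ _ => rfl
  -- weighted ℕ-indexed summabilities
  have ma : Summable fun u : ℕ => (u : ℝ) * ‖a (-(u : ℤ))‖ := by
    refine (ha1.comp_injective (i := fun u : ℕ => -(u : ℤ))
      (fun x y h => by have h' : -(x : ℤ) = -(y : ℤ) := h; omega)).congr
      fun u => ?_
    show |((-(u : ℤ) : ℤ) : ℝ)| * _ = _
    push_cast
    rw [abs_neg, abs_of_nonneg (Nat.cast_nonneg u)]
  have mb : Summable fun v : ℕ => (v : ℝ) * ‖b (v : ℤ)‖ := by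
    refine (hb1.comp_injective (i := fun v : ℕ => (v : ℤ))
      (fun x y h => by have h' : (x : ℤ) = (y : ℤ) := h; omega)).congr
      fun v => ?_
    show |(((v : ℤ) : ℤ) : ℝ)| * _ = _
    push_cast
    rw [abs_of_nonneg (Nat.cast_nonneg v)]
  -- the triangular weight function
  have hh0 : ∀ x : ℕ × ℕ, (0 : ℝ) ≤ (if x.2 < x.1 then ‖a (-(x.1 : ℤ))‖ else 0) := by
    intro x
    split
    · exact norm_nonneg _
    · exact le_refl 0
  have hcol : ∀ u : ℕ, Summable fun i : ℕ =>
      (if i < u then ‖a (-(u : ℤ))‖ else 0) := fun u =>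
    summable_of_ne_finset_zero (s := Finset.range u) (fun i hi => if_neg (by simpa using hi))
  have hrow : ∀ u : ℕ, (∑' i : ℕ, (if i < u then ‖a (-(u : ℤ))‖ else 0))
      = (u : ℝ) * ‖a (-(u : ℤ))‖ := fun u => tsum_if_lt u _
  have hh : Summable (fun x : ℕ × ℕ => if x.2 < x.1 then ‖a (-(x.1 : ℤ))‖ else 0) :=
    (summable_prod_of_nonneg hh0).mpr ⟨hcol, ma.congr fun u => (hrow u).symm⟩
  have hhts : (∑' x : ℕ × ℕ, (if x.2 < x.1 then ‖a (-(x.1 : ℤ))‖ else 0))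
      = ∑' u : ℕ, (u : ℝ) * ‖a (-(u : ℤ))‖ := by
    rw [Summable.tsum_prod' hh (fun u => hh.prod_factor u)]
    exact tsum_congr hrow
  -- the four key summabilities with bounds on the triple index
  obtain ⟨hF1, hts1b⟩ := summable_mul_inj
    (F := fun q : (ℕ × ℕ) × ℕ => ‖HankM a q.1.1 q.2‖ * ‖HankP b q.2 q.1.2‖)
    (f := fun x : ℕ × ℕ => if x.2 < x.1 then ‖a (-(x.1 : ℤ))‖ else 0)
    (g := fun v : ℕ => (v : ℝ) * ‖b (v : ℤ)‖)
    hh mb hh0 (fun v => mul_nonneg (Nat.cast_nonneg v) (norm_nonneg _))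
    (fun q => ((q.1.1 + q.2 + 1, q.1.1), q.2 + q.1.2 + 1))
    (by rintro ⟨⟨i, j⟩, r⟩ ⟨⟨i', j'⟩, r'⟩ hxy
        simp only [Prod.mk.injEq] at hxy ⊢
        omega)
    (by rintro ⟨⟨i, j⟩, r⟩
        show ‖HankM a i r‖ * ‖HankP b r j‖ ≤
          (if i < i + r + 1 then ‖a (-((i + r + 1 : ℕ) : ℤ))‖ else 0)
            * (((r + j + 1 : ℕ) : ℝ) * ‖b ((r + j + 1 : ℕ) : ℤ)‖)
        rw [if_pos (by omega),
          show (-((i + r + 1 : ℕ) : ℤ)) = -((i : ℤ) + (r : ℤ) + 1) by push_cast; ring,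
          show ((r + j + 1 : ℕ) : ℤ) = (r : ℤ) + (j : ℤ) + 1 by push_cast; ring]
        show ‖a (-((i : ℤ) + (r : ℤ) + 1))‖ * ‖b ((r : ℤ) + (j : ℤ) + 1)‖ ≤ _
        refine mul_le_mul_of_nonneg_left ?_ (norm_nonneg _)
        refine le_mul_of_one_le_left (norm_nonneg _) ?_
        have h1n : (1 : ℕ) ≤ r + j + 1 := by omega
        exact_mod_cast h1n)
    (fun q => mul_nonneg (norm_nonneg _) (norm_nonneg _))
  obtain ⟨hF2, hts2b⟩ := summable_mul_inj
    (F := fun q : (ℕ × ℕ) × ℕ => ‖Toep a q.1.1 q.2‖ * ‖Eb q.2 q.1.2‖)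
    (f := fun k : ℤ => ‖a k‖)
    (g := fun p : ℕ × ℕ => ‖Eb p.1 p.2‖)
    ha hEb (fun _ => norm_nonneg _) (fun _ => norm_nonneg _)
    (fun q => (((q.2 : ℤ) - (q.1.1 : ℤ)), (q.2, q.1.2)))
    (by rintro ⟨⟨i, j⟩, r⟩ ⟨⟨i', j'⟩, r'⟩ hxy
        simp only [Prod.mk.injEq] at hxy ⊢
        omega)
    (fun q => le_of_eq rfl)
    (fun q => mul_nonneg (norm_nonneg _) (norm_nonneg _))
  obtain ⟨hF3, hts3b⟩ := summable_mul_inj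
    (F := fun q : (ℕ × ℕ) × ℕ => ‖Ea q.1.1 q.2‖ * ‖Toep b q.2 q.1.2‖)
    (f := fun p : ℕ × ℕ => ‖Ea p.1 p.2‖)
    (g := fun k : ℤ => ‖b k‖)
    hEa hb (fun _ => norm_nonneg _) (fun _ => norm_nonneg _)
    (fun q => ((q.1.1, q.2), ((q.1.2 : ℤ) - (q.2 : ℤ))))
    (by rintro ⟨⟨i, j⟩, r⟩ ⟨⟨i', j'⟩, r'⟩ hxy
        simp only [Prod.mk.injEq] at hxy ⊢
        omega)
    (fun q => le_of_eq rfl)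
    (fun q => mul_nonneg (norm_nonneg _) (norm_nonneg _))
  obtain ⟨hF4, hts4b⟩ := summable_mul_inj
    (F := fun q : (ℕ × ℕ) × ℕ => ‖Ea q.1.1 q.2‖ * ‖Eb q.2 q.1.2‖)
    (f := fun p : ℕ × ℕ => ‖Ea p.1 p.2‖)
    (g := fun p : ℕ × ℕ => ‖Eb p.1 p.2‖)
    hEa hEb (fun _ => norm_nonneg _) (fun _ => norm_nonneg _)
    (fun q => ((q.1.1, q.2), (q.2, q.1.2)))
    (by rintro ⟨⟨i, j⟩, r⟩ ⟨⟨i', j'⟩, r'⟩ hxy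
        simp only [Prod.mk.injEq] at hxy ⊢
        omega)
    (fun q => le_of_eq rfl)
    (fun q => mul_nonneg (norm_nonneg _) (norm_nonneg _))
  obtain ⟨sH, habs1, hout1, htse1⟩ := matMul_bound hF1
  obtain ⟨s2, habs2, hout2, htse2⟩ := matMul_bound hF2
  obtain ⟨s3, habs3, hout3, htse3⟩ := matMul_bound hF3
  obtain ⟨s4, habs4, hout4, htse4⟩ := matMul_bound hF4
  -- pointwise bound on |Ec|
  have hEcle : ∀ p : ℕ × ℕ, ‖Ec p.1 p.2‖ ≤
      (∑' r : ℕ, ‖HankM a p.1 r‖ * ‖HankP b r p.2‖)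
      + (∑' r : ℕ, ‖Toep a p.1 r‖ * ‖Eb r p.2‖)
      + (∑' r : ℕ, ‖Ea p.1 r‖ * ‖Toep b r p.2‖)
      + (∑' r : ℕ, ‖Ea p.1 r‖ * ‖Eb r p.2‖) := by
    intro p
    have e0 : Ec p.1 p.2 = -(matMul (HankM a) (HankP b) p.1 p.2) + matMul (Toep a) Eb p.1 p.2
        + matMul Ea (Toep b) p.1 p.2 + matMul Ea Eb p.1 p.2 := rfl
    have key : ‖Ec p.1 p.2‖ ≤ ‖matMul (HankM a) (HankP b) p.1 p.2‖
        + ‖matMul (Toep a) Eb p.1 p.2‖ + ‖matMul Ea (Toep b) p.1 p.2‖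
        + ‖matMul Ea Eb p.1 p.2‖ := by
      rw [e0]
      have t1 := norm_add_le (-(matMul (HankM a) (HankP b) p.1 p.2) + matMul (Toep a) Eb p.1 p.2
        + matMul Ea (Toep b) p.1 p.2) (matMul Ea Eb p.1 p.2)
      have t2 := norm_add_le (-(matMul (HankM a) (HankP b) p.1 p.2) + matMul (Toep a) Eb p.1 p.2)
        (matMul Ea (Toep b) p.1 p.2)
      have t3 := norm_add_le (-(matMul (HankM a) (HankP b) p.1 p.2)) (matMul (Toep a) Eb p.1 p.2)
      rw [norm_neg] at t3
      linarith
    have k1 := habs1 p.1 p.2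
    have k2 := habs2 p.1 p.2
    have k3 := habs3 p.1 p.2
    have k4 := habs4 p.1 p.2
    linarith
  have hGsum : Summable (fun p : ℕ × ℕ =>
      (∑' r : ℕ, ‖HankM a p.1 r‖ * ‖HankP b r p.2‖)
      + (∑' r : ℕ, ‖Toep a p.1 r‖ * ‖Eb r p.2‖)
      + (∑' r : ℕ, ‖Ea p.1 r‖ * ‖Toep b r p.2‖)
      + (∑' r : ℕ, ‖Ea p.1 r‖ * ‖Eb r p.2‖)) :=
    ((hout1.add hout2).add hout3).add hout4
  have memEc : MemF Ec :=
    Summable.of_nonneg_of_le (fun p => norm_nonneg _) hEcle hGsum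
  -- the identity
  have hident : ∀ i j : ℕ, matMul A B i j = Toep c i j + Ec i j := by
    intro i j
    have s1 : Summable fun r : ℕ => Toep a i r * Toep b r j := by
      have hbs : Summable fun r : ℕ => ‖b ((j : ℤ) - (r : ℤ))‖ :=
        hb.comp_injective (i := fun r : ℕ => (j : ℤ) - (r : ℤ))
          (fun x y h => by have h' : (j : ℤ) - (x : ℤ) = (j : ℤ) - (y : ℤ) := h; omega)
      refine Summable.of_norm (Summable.of_nonneg_of_le (fun r => norm_nonneg _)
        (fun r => ?_) (hbs.mul_left (WNorm a)))
      rw [norm_mul]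
      exact mul_le_mul_of_nonneg_right
        (Summable.le_tsum ha _ fun _ _ => norm_nonneg _) (norm_nonneg _)
    have sH' : Summable fun r : ℕ => HankM a i r * HankP b r j := sH i j
    have s2' : Summable fun r : ℕ => Toep a i r * Eb r j := s2 i j
    have s3' : Summable fun r : ℕ => Ea i r * Toep b r j := s3 i j
    have s4' : Summable fun r : ℕ => Ea i r * Eb r j := s4 i j
    have expand : matMul A B i j = (∑' r : ℕ, Toep a i r * Toep b r j)
        + (matMul (Toep a) Eb i j + (matMul Ea (Toep b) i j + matMul Ea Eb i j)) := by
      have he : (fun r : ℕ => A i r * B r j) = fun r : ℕ =>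
          Toep a i r * Toep b r j + (Toep a i r * Eb r j
            + (Ea i r * Toep b r j + Ea i r * Eb r j)) :=
        funext fun r => by rw [hA, hB]; ring
      show (∑' r : ℕ, A i r * B r j) = _
      rw [he, Summable.tsum_add s1 (s2'.add (s3'.add s4')), Summable.tsum_add s2' (s3'.add s4'),
        Summable.tsum_add s3' s4']
      rfl
    have hZ : HasSum (fun s : ℤ => a (s - (i : ℤ)) * b ((j : ℤ) - s))
        ((∑' r : ℕ, Toep a i r * Toep b r j) + matMul (HankM a) (HankP b) i j) := by
      refine HasSum.of_nat_of_neg_add_one s1.hasSum ?_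
      show HasSum (fun n : ℕ => a (-((n : ℤ) + 1) - (i : ℤ)) * b ((j : ℤ) - -((n : ℤ) + 1)))
        (matMul (HankM a) (HankP b) i j)
      have heq : (fun n : ℕ => a (-((n : ℤ) + 1) - (i : ℤ)) * b ((j : ℤ) - -((n : ℤ) + 1)))
          = fun n : ℕ => HankM a i n * HankP b n j := funext fun n => by
        rw [show -((n : ℤ) + 1) - (i : ℤ) = -((i : ℤ) + (n : ℤ) + 1) by ring,
          show (j : ℤ) - -((n : ℤ) + 1) = (n : ℤ) + (j : ℤ) + 1 by ring]
        rfl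
      rw [heq]
      exact sH'.hasSum
    have hTc : Toep c i j = (∑' r : ℕ, Toep a i r * Toep b r j)
        + matMul (HankM a) (HankP b) i j := by
      have e1 : Toep c i j = ∑' m : ℤ, a m * b ((j : ℤ) - (i : ℤ) - m) := hc _
      have e2 : (∑' s : ℤ, a (s - (i : ℤ)) * b ((j : ℤ) - s))
          = ∑' m : ℤ, a m * b ((j : ℤ) - (i : ℤ) - m) := by
        rw [← (Equiv.subRight (i : ℤ)).tsum_eq (fun m : ℤ => a m * b ((j : ℤ) - (i : ℤ) - m))]
        refine tsum_congr fun s => ?_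
        show a (s - (i : ℤ)) * b ((j : ℤ) - s)
          = a (s - (i : ℤ)) * b ((j : ℤ) - (i : ℤ) - (s - (i : ℤ)))
        rw [show (j : ℤ) - (i : ℤ) - (s - (i : ℤ)) = (j : ℤ) - s by ring]
      rw [e1, ← e2, hZ.tsum_eq]
    rw [expand]
    have hEcij : Ec i j = -(matMul (HankM a) (HankP b) i j) + matMul (Toep a) Eb i j
        + matMul Ea (Toep b) i j + matMul Ea Eb i j := rfl
    rw [hTc, hEcij]
    ring
  refine ⟨memEc, hident, ?_⟩
  -- norm bound
  have step1 : FNorm Ec ≤ ∑' p : ℕ × ℕ,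
      ((∑' r : ℕ, ‖HankM a p.1 r‖ * ‖HankP b r p.2‖)
      + (∑' r : ℕ, ‖Toep a p.1 r‖ * ‖Eb r p.2‖)
      + (∑' r : ℕ, ‖Ea p.1 r‖ * ‖Toep b r p.2‖)
      + (∑' r : ℕ, ‖Ea p.1 r‖ * ‖Eb r p.2‖)) :=
    Summable.tsum_le_tsum hEcle memEc hGsum
  have step2 : (∑' p : ℕ × ℕ,
      ((∑' r : ℕ, ‖HankM a p.1 r‖ * ‖HankP b r p.2‖)
      + (∑' r : ℕ, ‖Toep a p.1 r‖ * ‖Eb r p.2‖)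
      + (∑' r : ℕ, ‖Ea p.1 r‖ * ‖Toep b r p.2‖)
      + (∑' r : ℕ, ‖Ea p.1 r‖ * ‖Eb r p.2‖)))
      = (∑' p : ℕ × ℕ, ∑' r : ℕ, ‖HankM a p.1 r‖ * ‖HankP b r p.2‖)
      + (∑' p : ℕ × ℕ, ∑' r : ℕ, ‖Toep a p.1 r‖ * ‖Eb r p.2‖)
      + (∑' p : ℕ × ℕ, ∑' r : ℕ, ‖Ea p.1 r‖ * ‖Toep b r p.2‖)
      + (∑' p : ℕ × ℕ, ∑' r : ℕ, ‖Ea p.1 r‖ * ‖Eb r p.2‖) := by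
    rw [Summable.tsum_add ((hout1.add hout2).add hout3) hout4,
      Summable.tsum_add (hout1.add hout2) hout3, Summable.tsum_add hout1 hout2]
  have hT1 : (∑' p : ℕ × ℕ, ∑' r : ℕ, ‖HankM a p.1 r‖ * ‖HankP b r p.2‖)
      ≤ (∑' k : ℕ, (k : ℝ) * ‖a (-(k : ℤ))‖)
        * (∑' k : ℕ, (k : ℝ) * ‖b (k : ℤ)‖) := by
    rw [htse1]
    exact le_of_le_of_eq hts1b (by rw [hhts])
  have hT2 : (∑' p : ℕ × ℕ, ∑' r : ℕ, ‖Toep a p.1 r‖ * ‖Eb r p.2‖)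
      ≤ WNorm a * FNorm Eb := by
    rw [htse2]; exact hts2b
  have hT3 : (∑' p : ℕ × ℕ, ∑' r : ℕ, ‖Ea p.1 r‖ * ‖Toep b r p.2‖)
      ≤ WNorm b * FNorm Ea := by
    rw [htse3]; exact le_of_le_of_eq hts3b (mul_comm _ _)
  have hT4 : (∑' p : ℕ × ℕ, ∑' r : ℕ, ‖Ea p.1 r‖ * ‖Eb r p.2‖)
      ≤ FNorm Ea * FNorm Eb := by
    rw [htse4]; exact hts4b
  rw [step2] at step1
  linarith

end
end

section
/- Define the CQT-norm of $A=T(a)+E$ with $a\in\mathcal W_1$, $E\in\mathcal F$ by $\|A\|_{\mathcal{CQT}}=\|a\|_{\mathcal W}+\|a'\|_{\mathcal W}+\|E\|_{\mathcal F}$. Then for any two CQT matrices $A=T(a)+E_a$ and $B=T(b)+E_b$, the product $AB$ is a CQT matrix with symbol $ab$ and $\|AB\|_{\mathcal{CQT}}\le \|A\|_{\mathcal{CQT}}\,\|B\|_{\mathcal{CQT}}$. -/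
noncomputable section
open Function

namespace CQTaux

/-- tsum over product of separated nonneg functions. -/
lemma prodMul {ι ι' : Type*} {f : ι → ℝ} {g : ι' → ℝ}
    (hf : Summable f) (hg : Summable g) (hf0 : ∀ i, 0 ≤ f i) (hg0 : ∀ j, 0 ≤ g j) :
    Summable (fun p : ι × ι' => f p.1 * g p.2) ∧
      (∑' p : ι × ι', f p.1 * g p.2) = (∑' i, f i) * ∑' j, g j := by
  have hs := hf.mul_of_nonneg hg hf0 hg0
  refine ⟨hs, ?_⟩
  rw [Summable.tsum_prod hs]
  calc (∑' i, ∑' j, f i * g j) = ∑' i, f i * ∑' j, g j := by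
        exact tsum_congr fun i => tsum_mul_left
    _ = (∑' i, f i) * ∑' j, g j := tsum_mul_right

/-- sum over an injectively-indexed family is at most the full sum. -/
lemma tsum_comp_le {ι κ : Type*} {f : κ → ℝ} (hf : Summable f) (h0 : ∀ k, 0 ≤ f k)
    (e : ι → κ) (he : Injective e) :
    Summable (fun i => f (e i)) ∧ (∑' i, f (e i)) ≤ ∑' k, f k := by
  have hs : Summable (fun i => f (e i)) := hf.comp_injective he
  exact ⟨hs, Summable.tsum_le_tsum_of_inj e he (fun c _ => h0 c) (fun i => le_rfl) hs hf⟩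

/-- tail-sum lemma: `∑_n ∑_i g (n+i) = ∑_s (s+1) g s`. -/
lemma tailLemma (g : ℕ → ℝ) (h0 : ∀ s, 0 ≤ g s)
    (h1 : Summable fun s : ℕ => ((s : ℝ) + 1) * g s) :
    (∀ n, Summable fun i : ℕ => g (n + i)) ∧
      Summable (fun n : ℕ => ∑' i : ℕ, g (n + i)) ∧
      (∑' n : ℕ, ∑' i : ℕ, g (n + i)) = ∑' s : ℕ, ((s : ℝ) + 1) * g s := by
  classical
  set W : ℕ × ℕ → ℝ := fun p => if p.2 ≤ p.1 then g p.1 else 0 with hWdef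
  have hW0 : ∀ p, 0 ≤ W p := by
    intro p; simp only [W]; split
    · exact h0 _
    · exact le_rfl
  have hfib : ∀ s, Summable fun n => W (s, n) := by
    intro s
    apply summable_of_ne_finset_zero (s := Finset.range (s + 1))
    intro n hn
    simp only [Finset.mem_range] at hn
    simp only [W]
    rw [if_neg (by omega)]
  have houter : ∀ s, (∑' n, W (s, n)) = ((s : ℝ) + 1) * g s := by
    intro s
    rw [tsum_eq_sum (s := Finset.range (s + 1))
      (fun n hn => by simp only [Finset.mem_range] at hn; simp only [W]; rw [if_neg (by omega)])]
    have : ∀ n ∈ Finset.range (s + 1), W (s, n) = g s := by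
      intro n hn; simp only [Finset.mem_range] at hn; simp only [W]; rw [if_pos (by omega)]
    rw [Finset.sum_congr rfl this, Finset.sum_const, Finset.card_range, nsmul_eq_mul]
    push_cast; ring
  have hWsum : Summable W := by
    apply (summable_prod_of_nonneg hW0).2
    refine ⟨hfib, ?_⟩
    apply h1.congr
    intro s; exact (houter s).symm
  have hW' : Summable fun p : ℕ × ℕ => W (p.2, p.1) := hWsum.prod_symm
  have hcol : ∀ n, Summable fun s => W (s, n) := fun n => hW'.prod_factor n
  have hval : ∀ n i, W (n + i, n) = g (n + i) := by
    intro n i; simp only [W]; rw [if_pos (by omega)]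
  have hufib : ∀ n, Summable fun i : ℕ => g (n + i) := by
    intro n
    have := (hcol n).comp_injective (add_right_injective n)
    exact this.congr fun i => hval n i
  have huval : ∀ n, (∑' i : ℕ, g (n + i)) = ∑' s, W (s, n) := by
    intro n
    have := Function.Injective.tsum_eq (f := fun s => W (s, n))
      (add_right_injective n)
      (by
        intro s hs
        simp only [Function.support, Set.mem_setOf_eq, W] at hs
        refine ⟨s - n, ?_⟩
        by_cases hns : n ≤ s
        · simp only; omega
        · rw [if_neg hns] at hs; exact absurd rfl hs)
    rw [← this]
    exact tsum_congr fun i => (hval n i).symm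
  refine ⟨hufib, ?_, ?_⟩
  · exact (hW'.prod).congr fun n => (huval n).symm
  · calc (∑' n : ℕ, ∑' i : ℕ, g (n + i)) = ∑' n, ∑' s, W (s, n) := tsum_congr huval
      _ = ∑' p : ℕ × ℕ, W (p.2, p.1) := (Summable.tsum_prod hW').symm
      _ = ∑' p : ℕ × ℕ, W p := (Equiv.prodComm ℕ ℕ).tsum_eq W
      _ = ∑' s, ∑' n, W (s, n) := Summable.tsum_prod hWsum
      _ = ∑' s : ℕ, ((s : ℝ) + 1) * g s := tsum_congr houter

/-- Convolution kernel summability and total sum, indexed `(k, m) ↦ f m * g (k - m)`. -/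
lemma convKernel {f g : ℤ → ℝ} (hf : Summable f) (hg : Summable g)
    (hf0 : ∀ k, 0 ≤ f k) (hg0 : ∀ k, 0 ≤ g k) :
    Summable (fun q : ℤ × ℤ => f q.2 * g (q.1 - q.2)) ∧
      (∑' q : ℤ × ℤ, f q.2 * g (q.1 - q.2)) = (∑' k, f k) * ∑' k, g k := by
  obtain ⟨hP, hPt⟩ := prodMul hf hg hf0 hg0
  let e : ℤ × ℤ ≃ ℤ × ℤ :=
    ⟨fun p => (p.2 + p.1, p.1), fun q => (q.2, q.1 - q.2), fun p => by simp, fun q => by simp⟩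
  have he : ∀ p : ℤ × ℤ, (fun q : ℤ × ℤ => f q.2 * g (q.1 - q.2)) (e p) = f p.1 * g p.2 := by
    intro p
    show f p.1 * g (p.2 + p.1 - p.1) = f p.1 * g p.2
    rw [add_sub_cancel_right]
  constructor
  · rw [← e.summable_iff]
    exact hP.congr fun p => (he p).symm
  · rw [← e.tsum_eq (fun q : ℤ × ℤ => f q.2 * g (q.1 - q.2)), tsum_congr he, hPt]

/-- fiberwise version of convKernel -/
lemma convFiber {f g : ℤ → ℝ} (hf : Summable f) (hg : Summable g)
    (hf0 : ∀ k, 0 ≤ f k) (hg0 : ∀ k, 0 ≤ g k) :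
    (∀ k : ℤ, Summable fun m => f m * g (k - m)) ∧
      Summable (fun k : ℤ => ∑' m, f m * g (k - m)) ∧
      (∑' k : ℤ, ∑' m, f m * g (k - m)) = (∑' k, f k) * ∑' k, g k := by
  obtain ⟨hK, hKt⟩ := convKernel hf hg hf0 hg0
  exact ⟨fun k => hK.prod_factor k, hK.prod, by rw [← Summable.tsum_prod hK, hKt]⟩

/-- Piece `T(a)·E_b`:  `∑_{i,j,r} f(r-i) F r j ≤ (∑ f)(∑ F)`. -/
lemma pieceT2R {f : ℤ → ℝ} {F : ℕ → ℕ → ℝ} (hf : Summable f) (hf0 : ∀ k, 0 ≤ f k)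
    (hF : Summable fun p : ℕ × ℕ => F p.1 p.2) (hF0 : ∀ i j, 0 ≤ F i j) :
    Summable (fun q : (ℕ × ℕ) × ℕ => f ((q.2 : ℤ) - q.1.1) * F q.2 q.1.2) ∧
      (∑' q : (ℕ × ℕ) × ℕ, f ((q.2 : ℤ) - q.1.1) * F q.2 q.1.2)
        ≤ (∑' k, f k) * ∑' p : ℕ × ℕ, F p.1 p.2 := by
  set G : (ℕ × ℕ) × ℕ → ℝ := fun q => f ((q.1.1 : ℤ) - q.2) * F q.1.1 q.1.2 with hGdef
  have hG0 : ∀ q, 0 ≤ G q := fun q => mul_nonneg (hf0 _) (hF0 _ _)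
  have hinj : ∀ r : ℕ, Injective (fun i : ℕ => (r : ℤ) - i) := by
    intro r x y h; simp only at h; omega
  have hfib : ∀ x : ℕ × ℕ, Summable fun i : ℕ => G (x, i) := by
    intro x
    exact ((tsum_comp_le hf hf0 _ (hinj x.1)).1).mul_right (F x.1 x.2)
  have houter : ∀ x : ℕ × ℕ, (∑' i : ℕ, G (x, i)) = (∑' i : ℕ, f ((x.1 : ℤ) - i)) * F x.1 x.2 := by
    intro x; simp only [hGdef]; exact tsum_mul_right
  have houtle : ∀ x : ℕ × ℕ, (∑' i : ℕ, G (x, i)) ≤ (∑' k, f k) * F x.1 x.2 := by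
    intro x
    rw [houter x]
    exact mul_le_mul_of_nonneg_right (tsum_comp_le hf hf0 _ (hinj x.1)).2 (hF0 _ _)
  have houtsum : Summable fun x : ℕ × ℕ => ∑' i : ℕ, G (x, i) := by
    apply Summable.of_nonneg_of_le (fun x => tsum_nonneg fun i => hG0 (x, i)) houtle
      (hF.mul_left _)
  have hGsum : Summable G := (summable_prod_of_nonneg hG0).2 ⟨hfib, houtsum⟩
  have hGt : (∑' q, G q) ≤ (∑' k, f k) * ∑' p : ℕ × ℕ, F p.1 p.2 := by
    rw [Summable.tsum_prod hGsum, ← tsum_mul_left]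
    exact Summable.tsum_le_tsum houtle houtsum (hF.mul_left _)
  let e : (ℕ × ℕ) × ℕ ≃ (ℕ × ℕ) × ℕ :=
    ⟨fun q => ((q.2, q.1.2), q.1.1), fun q => ((q.2, q.1.2), q.1.1), fun q => rfl, fun q => rfl⟩
  have he : ∀ q : (ℕ × ℕ) × ℕ, G (e q) = f ((q.2 : ℤ) - q.1.1) * F q.2 q.1.2 := fun q => rfl
  constructor
  · exact (e.summable_iff.mpr hGsum).congr he
  · calc (∑' q : (ℕ × ℕ) × ℕ, f ((q.2 : ℤ) - q.1.1) * F q.2 q.1.2)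
        = ∑' q, G (e q) := tsum_congr fun q => (he q).symm
      _ = ∑' q, G q := e.tsum_eq G
      _ ≤ _ := hGt

/-- Piece `E_a·T(b)`:  `∑_{i,j,r} F i r f(j-r) ≤ (∑ F)(∑ f)`. -/
lemma pieceT3R {f : ℤ → ℝ} {F : ℕ → ℕ → ℝ} (hf : Summable f) (hf0 : ∀ k, 0 ≤ f k)
    (hF : Summable fun p : ℕ × ℕ => F p.1 p.2) (hF0 : ∀ i j, 0 ≤ F i j) :
    Summable (fun q : (ℕ × ℕ) × ℕ => F q.1.1 q.2 * f ((q.1.2 : ℤ) - q.2)) ∧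
      (∑' q : (ℕ × ℕ) × ℕ, F q.1.1 q.2 * f ((q.1.2 : ℤ) - q.2))
        ≤ (∑' p : ℕ × ℕ, F p.1 p.2) * ∑' k, f k := by
  set G : (ℕ × ℕ) × ℕ → ℝ := fun q => F q.1.1 q.1.2 * f ((q.2 : ℤ) - q.1.2) with hGdef
  have hG0 : ∀ q, 0 ≤ G q := fun q => mul_nonneg (hF0 _ _) (hf0 _)
  have hinj : ∀ r : ℕ, Injective (fun j : ℕ => (j : ℤ) - r) := by
    intro r x y h; simp only at h; omega
  have hfib : ∀ x : ℕ × ℕ, Summable fun j : ℕ => G (x, j) := by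
    intro x
    exact ((tsum_comp_le hf hf0 _ (hinj x.2)).1).mul_left (F x.1 x.2)
  have houtle : ∀ x : ℕ × ℕ, (∑' j : ℕ, G (x, j)) ≤ F x.1 x.2 * ∑' k, f k := by
    intro x
    simp only [hGdef]
    rw [tsum_mul_left]
    exact mul_le_mul_of_nonneg_left (tsum_comp_le hf hf0 _ (hinj x.2)).2 (hF0 _ _)
  have houtsum : Summable fun x : ℕ × ℕ => ∑' j : ℕ, G (x, j) := by
    apply Summable.of_nonneg_of_le (fun x => tsum_nonneg fun j => hG0 (x, j)) houtle
      (hF.mul_right _)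
  have hGsum : Summable G := (summable_prod_of_nonneg hG0).2 ⟨hfib, houtsum⟩
  have hGt : (∑' q, G q) ≤ (∑' p : ℕ × ℕ, F p.1 p.2) * ∑' k, f k := by
    rw [Summable.tsum_prod hGsum, ← tsum_mul_right]
    exact Summable.tsum_le_tsum houtle houtsum (hF.mul_right _)
  let e : (ℕ × ℕ) × ℕ ≃ (ℕ × ℕ) × ℕ :=
    ⟨fun q => ((q.1.1, q.2), q.1.2), fun q => ((q.1.1, q.2), q.1.2), fun q => rfl, fun q => rfl⟩
  have he : ∀ q : (ℕ × ℕ) × ℕ, G (e q) = F q.1.1 q.2 * f ((q.1.2 : ℤ) - q.2) := fun q => rfl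
  constructor
  · exact (e.summable_iff.mpr hGsum).congr he
  · calc (∑' q : (ℕ × ℕ) × ℕ, F q.1.1 q.2 * f ((q.1.2 : ℤ) - q.2))
        = ∑' q, G (e q) := tsum_congr fun q => (he q).symm
      _ = ∑' q, G q := e.tsum_eq G
      _ ≤ _ := hGt

/-- Piece `E_a·E_b`. -/
lemma pieceT4R {F G : ℕ → ℕ → ℝ}
    (hF : Summable fun p : ℕ × ℕ => F p.1 p.2) (hF0 : ∀ i j, 0 ≤ F i j)
    (hG : Summable fun p : ℕ × ℕ => G p.1 p.2) (hG0 : ∀ i j, 0 ≤ G i j) :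
    Summable (fun q : (ℕ × ℕ) × ℕ => F q.1.1 q.2 * G q.2 q.1.2) ∧
      (∑' q : (ℕ × ℕ) × ℕ, F q.1.1 q.2 * G q.2 q.1.2)
        ≤ (∑' p : ℕ × ℕ, F p.1 p.2) * ∑' p : ℕ × ℕ, G p.1 p.2 := by
  set H : ℕ × (ℕ × ℕ) → ℝ := fun q => F q.2.1 q.1 * G q.1 q.2.2 with hHdef
  have hH0 : ∀ q, 0 ≤ H q := fun q => mul_nonneg (hF0 _ _) (hG0 _ _)
  have hFsym : Summable fun p : ℕ × ℕ => F p.2 p.1 := hF.prod_symm.congr fun p => rfl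
  have hcolF : ∀ r, Summable fun i => F i r := fun r => hFsym.prod_factor r
  have hrowG : ∀ r, Summable fun j => G r j := fun r => hG.prod_factor r
  have hfib : ∀ r : ℕ, Summable fun x : ℕ × ℕ => H (r, x) := by
    intro r
    exact (prodMul (hcolF r) (hrowG r) (fun i => hF0 i r) (fun j => hG0 r j)).1
  have houter : ∀ r : ℕ, (∑' x : ℕ × ℕ, H (r, x)) = (∑' i, F i r) * ∑' j, G r j := by
    intro r
    exact (prodMul (hcolF r) (hrowG r) (fun i => hF0 i r) (fun j => hG0 r j)).2
  have hVle : ∀ r, (∑' j, G r j) ≤ ∑' p : ℕ × ℕ, G p.1 p.2 := by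
    intro r
    exact (tsum_comp_le hG (fun p => hG0 p.1 p.2) (fun j => ((r, j) : ℕ × ℕ))
      (fun x y h => by simpa using (Prod.ext_iff.1 h).2)).2
  have hU : Summable fun r : ℕ => ∑' i, F i r := hFsym.prod
  have hUt : (∑' r : ℕ, ∑' i, F i r) = ∑' p : ℕ × ℕ, F p.1 p.2 := by
    rw [← Summable.tsum_prod hFsym]
    exact (Equiv.prodComm ℕ ℕ).tsum_eq (fun p : ℕ × ℕ => F p.1 p.2)
  have houtle : ∀ r : ℕ, (∑' x : ℕ × ℕ, H (r, x))
      ≤ (∑' i, F i r) * ∑' p : ℕ × ℕ, G p.1 p.2 := by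
    intro r
    rw [houter r]
    exact mul_le_mul_of_nonneg_left (hVle r) (tsum_nonneg fun i => hF0 i r)
  have houtsum : Summable fun r : ℕ => ∑' x : ℕ × ℕ, H (r, x) := by
    apply Summable.of_nonneg_of_le (fun r => tsum_nonneg fun x => hH0 (r, x)) houtle
      (hU.mul_right _)
  have hHsum : Summable H := (summable_prod_of_nonneg hH0).2 ⟨hfib, houtsum⟩
  have hHt : (∑' q, H q) ≤ (∑' p : ℕ × ℕ, F p.1 p.2) * ∑' p : ℕ × ℕ, G p.1 p.2 := by
    rw [Summable.tsum_prod hHsum, ← hUt, ← tsum_mul_right]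
    exact Summable.tsum_le_tsum houtle houtsum (hU.mul_right _)
  let e : (ℕ × ℕ) × ℕ ≃ ℕ × (ℕ × ℕ) :=
    ⟨fun q => (q.2, q.1), fun q => (q.2, q.1), fun q => rfl, fun q => rfl⟩
  have he : ∀ q : (ℕ × ℕ) × ℕ, H (e q) = F q.1.1 q.2 * G q.2 q.1.2 := fun q => rfl
  constructor
  · exact (e.summable_iff.mpr hHsum).congr he
  · calc (∑' q : (ℕ × ℕ) × ℕ, F q.1.1 q.2 * G q.2 q.1.2)
        = ∑' q, H (e q) := tsum_congr fun q => (he q).symm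
      _ = ∑' q, H q := e.tsum_eq H
      _ ≤ _ := hHt

/-- Piece `D = T(a)T(b) - T(ab)`. -/
lemma pieceDR {ga gb : ℕ → ℝ} (hga0 : ∀ s, 0 ≤ ga s) (hgb0 : ∀ s, 0 ≤ gb s)
    (hga1 : Summable fun s : ℕ => ((s : ℝ) + 1) * ga s)
    (hgb1 : Summable fun s : ℕ => ((s : ℝ) + 1) * gb s) :
    Summable (fun q : (ℕ × ℕ) × ℕ => ga (q.2 + q.1.1) * gb (q.2 + q.1.2)) ∧
      (∑' q : (ℕ × ℕ) × ℕ, ga (q.2 + q.1.1) * gb (q.2 + q.1.2))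
        ≤ (∑' s : ℕ, ((s : ℝ) + 1) * ga s) * ∑' s : ℕ, ((s : ℝ) + 1) * gb s := by
  obtain ⟨hafib, hasum, hat⟩ := tailLemma ga hga0 hga1
  obtain ⟨hbfib, hbsum, hbt⟩ := tailLemma gb hgb0 hgb1
  set u : ℕ → ℝ := fun n => ∑' i : ℕ, ga (n + i) with hu
  set v : ℕ → ℝ := fun n => ∑' j : ℕ, gb (n + j) with hv
  have hu0 : ∀ n, 0 ≤ u n := fun n => tsum_nonneg fun i => hga0 _
  have hv0 : ∀ n, 0 ≤ v n := fun n => tsum_nonneg fun j => hgb0 _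
  have hvle : ∀ n, v n ≤ ∑' m, v m := fun n => Summable.le_tsum hbsum n fun m _ => hv0 m
  set H : ℕ × (ℕ × ℕ) → ℝ := fun q => ga (q.1 + q.2.1) * gb (q.1 + q.2.2) with hHdef
  have hH0 : ∀ q, 0 ≤ H q := fun q => mul_nonneg (hga0 _) (hgb0 _)
  have hfib : ∀ n : ℕ, Summable fun x : ℕ × ℕ => H (n, x) := by
    intro n
    exact (prodMul (hafib n) (hbfib n) (fun i => hga0 _) (fun j => hgb0 _)).1
  have houter : ∀ n : ℕ, (∑' x : ℕ × ℕ, H (n, x)) = u n * v n := by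
    intro n
    exact (prodMul (hafib n) (hbfib n) (fun i => hga0 _) (fun j => hgb0 _)).2
  have houtle : ∀ n : ℕ, (∑' x : ℕ × ℕ, H (n, x)) ≤ u n * ∑' m, v m := by
    intro n
    rw [houter n]
    exact mul_le_mul_of_nonneg_left (hvle n) (hu0 n)
  have houtsum : Summable fun n : ℕ => ∑' x : ℕ × ℕ, H (n, x) := by
    apply Summable.of_nonneg_of_le (fun n => tsum_nonneg fun x => hH0 (n, x)) houtle
      (hasum.mul_right _)
  have hHsum : Summable H := (summable_prod_of_nonneg hH0).2 ⟨hfib, houtsum⟩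
  have hHt : (∑' q, H q) ≤ (∑' s : ℕ, ((s : ℝ) + 1) * ga s) * ∑' s : ℕ, ((s : ℝ) + 1) * gb s := by
    rw [Summable.tsum_prod hHsum, ← hat, ← hbt, ← tsum_mul_right]
    exact Summable.tsum_le_tsum houtle houtsum (hasum.mul_right _)
  let e : (ℕ × ℕ) × ℕ ≃ ℕ × (ℕ × ℕ) :=
    ⟨fun q => (q.2, q.1), fun q => (q.2, q.1), fun q => rfl, fun q => rfl⟩
  have he : ∀ q : (ℕ × ℕ) × ℕ, H (e q) = ga (q.2 + q.1.1) * gb (q.2 + q.1.2) := fun q => rfl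
  constructor
  · exact (e.summable_iff.mpr hHsum).congr he
  · calc (∑' q : (ℕ × ℕ) × ℕ, ga (q.2 + q.1.1) * gb (q.2 + q.1.2))
        = ∑' q, H (e q) := tsum_congr fun q => (he q).symm
      _ = ∑' q, H q := e.tsum_eq H
      _ ≤ _ := hHt

/-- weighted sums over a shifted injection into `ℤ`. -/
lemma weightShift (g : ℤ → ℝ) (h0 : ∀ k, 0 ≤ g k)
    (h1 : Summable fun k : ℤ => |(k : ℝ)| * g k) (e : ℕ → ℤ) (he : Injective e)
    (habs : ∀ s : ℕ, |((e s : ℤ) : ℝ)| = (s : ℝ) + 1) :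
    Summable (fun s : ℕ => ((s : ℝ) + 1) * g (e s)) ∧
      (∑' s : ℕ, ((s : ℝ) + 1) * g (e s)) ≤ ∑' k : ℤ, |(k : ℝ)| * g k := by
  obtain ⟨hs, hle⟩ := tsum_comp_le h1 (fun k => mul_nonneg (abs_nonneg _) (h0 k)) e he
  have hcongr : ∀ s : ℕ, |((e s : ℤ) : ℝ)| * g (e s) = ((s : ℝ) + 1) * g (e s) := by
    intro s; rw [habs s]
  exact ⟨hs.congr hcongr, by rwa [tsum_congr hcongr] at hle⟩

lemma abs_tsum_le {f : ℕ → ℂ} {g : ℕ → ℝ} (hfg : ∀ r, ‖f r‖ = g r)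
    (hg : Summable g) : ‖∑' r, f r‖ ≤ ∑' r, g r := by
  refine le_trans (norm_tsum_le_tsum_norm ?_) (le_of_eq (tsum_congr fun r => by
    rw [hfg r]))
  exact hg.congr fun r => by rw [← hfg r]

end CQTaux

/-- `‖a‖_{𝒲₁} = ‖a‖_W + ‖a'‖_W`. -/
def W1Norm (a : ℤ → ℂ) : ℝ :=
  (∑' k : ℤ, ‖a k‖) + ∑' k : ℤ, |(k : ℝ)| * ‖a k‖

open CQTaux Function in
/-- Sub-multiplicativity of the CQT-norm `‖T(a)+E‖ = ‖a‖_W + ‖a'‖_W + ‖E‖_𝓕`: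
the product of two CQT matrices is a CQT matrix with symbol `ab` and
`‖AB‖_CQT ≤ ‖A‖_CQT ‖B‖_CQT`. -/
theorem stmt14 (a b : ℤ → ℂ) (Ea Eb : ℕ → ℕ → ℂ)
    (ha : Summable fun k : ℤ => ‖a k‖)
    (ha1 : Summable fun k : ℤ => |(k : ℝ)| * ‖a k‖)
    (hb : Summable fun k : ℤ => ‖b k‖)
    (hb1 : Summable fun k : ℤ => |(k : ℝ)| * ‖b k‖)
    (hEa : MemF Ea) (hEb : MemF Eb)
    (c : ℤ → ℂ) (hc : ∀ k : ℤ, c k = ∑' m : ℤ, a m * b (k - m)) :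
    (Summable fun k : ℤ => ‖c k‖) ∧
    (Summable fun k : ℤ => |(k : ℝ)| * ‖c k‖) ∧
    ∃ Ec : ℕ → ℕ → ℂ, MemF Ec ∧
      (∀ i j, matMul (fun i j => Toep a i j + Ea i j) (fun i j => Toep b i j + Eb i j) i j
        = Toep c i j + Ec i j) ∧
      W1Norm c + FNorm Ec ≤ (W1Norm a + FNorm Ea) * (W1Norm b + FNorm Eb) := by
  have hEa' : Summable fun p : ℕ × ℕ => ‖Ea p.1 p.2‖ := hEa
  have hEb' : Summable fun p : ℕ × ℕ => ‖Eb p.1 p.2‖ := hEb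
  have h0a : ∀ k : ℤ, 0 ≤ ‖a k‖ := fun k => norm_nonneg _
  have h0b : ∀ k : ℤ, 0 ≤ ‖b k‖ := fun k => norm_nonneg _
  -- Step 1 : summability of |c|
  obtain ⟨hfibc, houtc, htotc⟩ := convFiber ha hb h0a h0b
  have hcle : ∀ k : ℤ,
      ‖c k‖ ≤ ∑' m, ‖a m‖ * ‖b (k - m)‖ := by
    intro k
    rw [hc k]
    refine le_trans (norm_tsum_le_tsum_norm ?_) (le_of_eq (tsum_congr fun m => ?_))
    · exact (hfibc k).congr fun m => by
        rw [norm_mul]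
    · rw [norm_mul]
  have hSc : Summable fun k : ℤ => ‖c k‖ :=
    Summable.of_nonneg_of_le (fun k => norm_nonneg _) hcle houtc
  have hCt : (∑' k : ℤ, ‖c k‖)
      ≤ (∑' k, ‖a k‖) * ∑' k, ‖b k‖ :=
    le_trans (Summable.tsum_le_tsum hcle hSc houtc) (le_of_eq htotc)
  -- Step 2 : summability of |k||c k|
  obtain ⟨hfib21, hout21, htot21⟩ := convFiber ha1 hb
    (fun k => mul_nonneg (abs_nonneg _) (h0a k)) h0b
  obtain ⟨hfib22, hout22, htot22⟩ := convFiber ha hb1 h0a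
    (fun k => mul_nonneg (abs_nonneg _) (h0b k))
  have hptw2 : ∀ k : ℤ, |(k : ℝ)| * ‖c k‖ ≤
      (∑' m : ℤ, (|(m : ℝ)| * ‖a m‖) * ‖b (k - m)‖) +
      ∑' m : ℤ, ‖a m‖ * (|((k - m : ℤ) : ℝ)| * ‖b (k - m)‖) := by
    intro k
    calc |(k : ℝ)| * ‖c k‖
        ≤ |(k : ℝ)| * ∑' m, ‖a m‖ * ‖b (k - m)‖ :=
          mul_le_mul_of_nonneg_left (hcle k) (abs_nonneg _)
      _ = ∑' m : ℤ, |(k : ℝ)| * (‖a m‖ * ‖b (k - m)‖) :=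
          tsum_mul_left.symm
      _ ≤ ∑' m : ℤ, ((|(m : ℝ)| * ‖a m‖) * ‖b (k - m)‖ +
            ‖a m‖ * (|((k - m : ℤ) : ℝ)| * ‖b (k - m)‖)) := by
          apply Summable.tsum_le_tsum ?_ (((hfibc k).mul_left _)) ((hfib21 k).add (hfib22 k))
          intro m
          have htri : |(k : ℝ)| ≤ |(m : ℝ)| + |((k - m : ℤ) : ℝ)| := by
            have : (k : ℝ) = (m : ℝ) + ((k - m : ℤ) : ℝ) := by push_cast; ring
            rw [this]; exact abs_add_le _ _
          have hmn := mul_nonneg (h0a m) (h0b (k - m))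
          nlinarith [hmn, abs_nonneg ((m : ℝ)), abs_nonneg (((k - m : ℤ) : ℝ))]
      _ = _ := Summable.tsum_add (hfib21 k) (hfib22 k)
  have hSc1 : Summable fun k : ℤ => |(k : ℝ)| * ‖c k‖ :=
    Summable.of_nonneg_of_le (fun k => mul_nonneg (abs_nonneg _) (norm_nonneg _))
      hptw2 (hout21.add hout22)
  have hCt1 : (∑' k : ℤ, |(k : ℝ)| * ‖c k‖) ≤
      (∑' k : ℤ, |(k : ℝ)| * ‖a k‖) * (∑' k : ℤ, ‖b k‖) +
      (∑' k : ℤ, ‖a k‖) * ∑' k : ℤ, |(k : ℝ)| * ‖b k‖ := by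
    refine le_trans (Summable.tsum_le_tsum hptw2 hSc1 (hout21.add hout22)) ?_
    rw [Summable.tsum_add hout21 hout22, htot21, htot22]
  refine ⟨hSc, hSc1, ?_⟩
  -- Step 3 : the correction matrix
  obtain ⟨hW2, hW2t⟩ := pieceT2R (f := fun k => ‖a k‖)
    (F := fun i j => ‖Eb i j‖) ha h0a hEb' (fun i j => norm_nonneg _)
  obtain ⟨hW3, hW3t⟩ := pieceT3R (f := fun k => ‖b k‖)
    (F := fun i j => ‖Ea i j‖) hb h0b hEa' (fun i j => norm_nonneg _)
  obtain ⟨hW4, hW4t⟩ := pieceT4R (F := fun i j => ‖Ea i j‖)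
    (G := fun i j => ‖Eb i j‖) hEa' (fun i j => norm_nonneg _)
    hEb' (fun i j => norm_nonneg _)
  obtain ⟨hga1, hgat⟩ := weightShift (fun k => ‖a k‖) h0a ha1
    (fun s => -(s : ℤ) - 1) (fun x y h => by simp only [] at h; omega)
    (fun s => by
      push_cast
      rw [show -(s : ℝ) - 1 = -((s : ℝ) + 1) by ring, abs_neg, abs_of_nonneg (by positivity)])
  obtain ⟨hgb1, hgbt⟩ := weightShift (fun k => ‖b k‖) h0b hb1
    (fun t => (t : ℤ) + 1) (fun x y h => by simp only [] at h; omega)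
    (fun t => by push_cast; rw [abs_of_nonneg (by positivity)])
  obtain ⟨hWD0, hWDt0⟩ := pieceDR (ga := fun s => ‖a (-(s : ℤ) - 1)‖)
    (gb := fun t => ‖b ((t : ℤ) + 1)‖)
    (fun s => norm_nonneg _) (fun t => norm_nonneg _) hga1 hgb1
  set WD : (ℕ × ℕ) × ℕ → ℝ := fun q =>
    ‖a (-((q.2 : ℤ) + 1) - q.1.1)‖ *
      ‖b ((q.1.2 : ℤ) - (-((q.2 : ℤ) + 1)))‖ with hWDdef
  set W2 : (ℕ × ℕ) × ℕ → ℝ := fun q =>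
    ‖a ((q.2 : ℤ) - q.1.1)‖ * ‖Eb q.2 q.1.2‖ with hW2def
  set W3 : (ℕ × ℕ) × ℕ → ℝ := fun q =>
    ‖Ea q.1.1 q.2‖ * ‖b ((q.1.2 : ℤ) - q.2)‖ with hW3def
  set W4 : (ℕ × ℕ) × ℕ → ℝ := fun q =>
    ‖Ea q.1.1 q.2‖ * ‖Eb q.2 q.1.2‖ with hW4def
  have hWDc : ∀ q : (ℕ × ℕ) × ℕ,
      ‖a (-((q.2 + q.1.1 : ℕ) : ℤ) - 1)‖ *
        ‖b (((q.2 + q.1.2 : ℕ) : ℤ) + 1)‖ = WD q := by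
    intro q
    simp only [hWDdef]
    congr 2 <;> push_cast <;> ring
  have hWDs : Summable WD := hWD0.congr hWDc
  have hW2s : Summable W2 := hW2
  have hW3s : Summable W3 := hW3
  have hW4s : Summable W4 := hW4
  have hMDt : (∑' x : ℕ × ℕ, ∑' n : ℕ, WD (x, n)) ≤
      (∑' k : ℤ, |(k : ℝ)| * ‖a k‖) * ∑' k : ℤ, |(k : ℝ)| * ‖b k‖ := by
    refine le_trans (le_of_eq (Summable.tsum_prod hWDs).symm) ?_
    rw [← tsum_congr hWDc]
    exact le_trans hWDt0 (mul_le_mul hgat hgbt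
      (tsum_nonneg fun s => mul_nonneg (by positivity) (norm_nonneg _))
      (tsum_nonneg fun k => mul_nonneg (abs_nonneg _) (norm_nonneg _)))
  have hM2t : (∑' x : ℕ × ℕ, ∑' r : ℕ, W2 (x, r)) ≤
      (∑' k : ℤ, ‖a k‖) * ∑' p : ℕ × ℕ, ‖Eb p.1 p.2‖ :=
    le_trans (le_of_eq (Summable.tsum_prod hW2s).symm) hW2t
  have hM3t : (∑' x : ℕ × ℕ, ∑' r : ℕ, W3 (x, r)) ≤
      (∑' p : ℕ × ℕ, ‖Ea p.1 p.2‖) * ∑' k : ℤ, ‖b k‖ :=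
    le_trans (le_of_eq (Summable.tsum_prod hW3s).symm) hW3t
  have hM4t : (∑' x : ℕ × ℕ, ∑' r : ℕ, W4 (x, r)) ≤
      (∑' p : ℕ × ℕ, ‖Ea p.1 p.2‖) * ∑' p : ℕ × ℕ, ‖Eb p.1 p.2‖ :=
    le_trans (le_of_eq (Summable.tsum_prod hW4s).symm) hW4t
  set Ec : ℕ → ℕ → ℂ := fun i j =>
    matMul (fun i j => Toep a i j + Ea i j) (fun i j => Toep b i j + Eb i j) i j -
      Toep c i j with hEcdef
  have hdecomp : ∀ i j : ℕ, Ec i j =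
      -(∑' n : ℕ, a (-((n : ℤ) + 1) - i) * b ((j : ℤ) - (-((n : ℤ) + 1)))) +
      (∑' r : ℕ, a ((r : ℤ) - i) * Eb r j) +
      (∑' r : ℕ, Ea i r * b ((j : ℤ) - r)) +
      (∑' r : ℕ, Ea i r * Eb r j) := by
    intro i j
    have hfai : Summable fun r : ℕ => ‖a ((r : ℤ) - i)‖ :=
      (tsum_comp_le ha h0a (fun r : ℕ => (r : ℤ) - i) (fun x y h => by simp only [] at h; omega)).1
    have hBle : ∀ t : ℤ, ‖b t‖ ≤ ∑' k : ℤ, ‖b k‖ :=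
      fun t => Summable.le_tsum hb t fun m _ => h0b m
    have hs1n : Summable fun r : ℕ =>
        ‖a ((r : ℤ) - i)‖ * ‖b ((j : ℤ) - r)‖ :=
      Summable.of_nonneg_of_le
        (fun r => mul_nonneg (norm_nonneg _) (norm_nonneg _))
        (fun r => mul_le_mul_of_nonneg_left (hBle _) (norm_nonneg _))
        (hfai.mul_right _)
    have hs1 : Summable fun r : ℕ => a ((r : ℤ) - i) * b ((j : ℤ) - r) :=
      Summable.of_norm (hs1n.congr fun r => by
        rw [norm_mul])
    have hs2 : Summable fun r : ℕ => a ((r : ℤ) - i) * Eb r j :=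
      Summable.of_norm ((hW2s.prod_factor (i, j)).congr fun r => by
        simp only [hW2def]
        rw [norm_mul])
    have hs3 : Summable fun r : ℕ => Ea i r * b ((j : ℤ) - r) :=
      Summable.of_norm ((hW3s.prod_factor (i, j)).congr fun r => by
        simp only [hW3def]
        rw [norm_mul])
    have hs4 : Summable fun r : ℕ => Ea i r * Eb r j :=
      Summable.of_norm ((hW4s.prod_factor (i, j)).congr fun r => by
        simp only [hW4def]
        rw [norm_mul])
    have hmul : matMul (fun i j => Toep a i j + Ea i j) (fun i j => Toep b i j + Eb i j) i j =
        (∑' r : ℕ, a ((r : ℤ) - i) * b ((j : ℤ) - r)) + (∑' r : ℕ, a ((r : ℤ) - i) * Eb r j) +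
        (∑' r : ℕ, Ea i r * b ((j : ℤ) - r)) + (∑' r : ℕ, Ea i r * Eb r j) := by
      have hterm : ∀ r : ℕ, (Toep a i r + Ea i r) * (Toep b r j + Eb r j) =
          a ((r : ℤ) - i) * b ((j : ℤ) - r) + a ((r : ℤ) - i) * Eb r j +
          Ea i r * b ((j : ℤ) - r) + Ea i r * Eb r j := by
        intro r; simp only [Toep]; ring
      show (∑' r : ℕ, (Toep a i r + Ea i r) * (Toep b r j + Eb r j)) = _
      rw [tsum_congr hterm, Summable.tsum_add ((hs1.add hs2).add hs3) hs4,
        Summable.tsum_add (hs1.add hs2) hs3, Summable.tsum_add hs1 hs2]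
    have hfz : Summable fun m : ℤ => a (m - i) * b ((j : ℤ) - m) := by
      apply Summable.of_norm
      have h1 := (hfibc ((j : ℤ) - i)).comp_injective
        (fun x y h => by simp only [] at h; omega : Injective fun m : ℤ => m - (i : ℤ))
      apply h1.congr
      intro m
      show ‖a (m - i)‖ * ‖b ((j : ℤ) - i - (m - i))‖ = _
      rw [sub_sub_sub_cancel_right, norm_mul]
    have hsplit2 : Summable fun n : ℕ => a (-((n : ℤ) + 1) - i) * b ((j : ℤ) - (-((n : ℤ) + 1))) :=
      hfz.comp_injective (fun x y h => by simp only [] at h; omega : Injective fun n : ℕ => -((n : ℤ) + 1))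
    have hcz : Toep c i j = (∑' n : ℕ, a ((n : ℤ) - i) * b ((j : ℤ) - n)) +
        ∑' n : ℕ, a (-((n : ℤ) + 1) - i) * b ((j : ℤ) - (-((n : ℤ) + 1))) := by
      show c ((j : ℤ) - i) = _
      calc c ((j : ℤ) - i) = ∑' m : ℤ, a m * b ((j : ℤ) - i - m) := hc _
        _ = ∑' m : ℤ, a (m - i) * b ((j : ℤ) - m) := by
            rw [← (Equiv.subRight (i : ℤ)).tsum_eq (fun m : ℤ => a m * b ((j : ℤ) - i - m))]
            refine tsum_congr fun m => ?_
            simp only [Equiv.subRight_apply]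
            rw [sub_sub_sub_cancel_right]
        _ = _ := tsum_of_nat_of_neg_add_one hs1 hsplit2
    simp only [hEcdef]
    rw [hmul, hcz]
    ring
  have hptwE : ∀ p : ℕ × ℕ, ‖Ec p.1 p.2‖ ≤
      (∑' n : ℕ, WD (p, n)) + (∑' r : ℕ, W2 (p, r)) +
      (∑' r : ℕ, W3 (p, r)) + (∑' r : ℕ, W4 (p, r)) := by
    intro p
    rw [hdecomp p.1 p.2]
    have bD : ‖-(∑' n : ℕ, a (-((n : ℤ) + 1) - p.1) *
        b ((p.2 : ℤ) - (-((n : ℤ) + 1))))‖ ≤ ∑' n : ℕ, WD (p, n) := by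
      rw [norm_neg]
      exact abs_tsum_le (fun n => by
        simp only [hWDdef]; rw [norm_mul]) (hWDs.prod_factor p)
    have b2 : ‖∑' r : ℕ, a ((r : ℤ) - p.1) * Eb r p.2‖ ≤ ∑' r : ℕ, W2 (p, r) :=
      abs_tsum_le (fun r => by simp only [hW2def]; rw [norm_mul])
        (hW2s.prod_factor p)
    have b3 : ‖∑' r : ℕ, Ea p.1 r * b ((p.2 : ℤ) - r)‖ ≤ ∑' r : ℕ, W3 (p, r) :=
      abs_tsum_le (fun r => by simp only [hW3def]; rw [norm_mul])
        (hW3s.prod_factor p)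
    have b4 : ‖∑' r : ℕ, Ea p.1 r * Eb r p.2‖ ≤ ∑' r : ℕ, W4 (p, r) :=
      abs_tsum_le (fun r => by simp only [hW4def]; rw [norm_mul])
        (hW4s.prod_factor p)
    calc ‖_ + _ + _ + _‖
        ≤ ‖_ + _ + _‖ + ‖∑' r : ℕ, Ea p.1 r * Eb r p.2‖ :=
          norm_add_le _ _
      _ ≤ (‖_ + _‖ + ‖∑' r : ℕ, Ea p.1 r * b ((p.2 : ℤ) - r)‖) +
          ‖∑' r : ℕ, Ea p.1 r * Eb r p.2‖ :=
          add_le_add (norm_add_le _ _) le_rfl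
      _ ≤ ((‖-(∑' n : ℕ, a (-((n : ℤ) + 1) - p.1) * b ((p.2 : ℤ) - (-((n : ℤ) + 1))))‖ +
          ‖∑' r : ℕ, a ((r : ℤ) - p.1) * Eb r p.2‖) +
          ‖∑' r : ℕ, Ea p.1 r * b ((p.2 : ℤ) - r)‖) +
          ‖∑' r : ℕ, Ea p.1 r * Eb r p.2‖ :=
          add_le_add (add_le_add (norm_add_le _ _) le_rfl) le_rfl
      _ ≤ _ := add_le_add (add_le_add (add_le_add bD b2) b3) b4
  have hMaj : Summable fun p : ℕ × ℕ =>
      (∑' n : ℕ, WD (p, n)) + (∑' r : ℕ, W2 (p, r)) +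
      (∑' r : ℕ, W3 (p, r)) + (∑' r : ℕ, W4 (p, r)) :=
    ((hWDs.prod.add hW2s.prod).add hW3s.prod).add hW4s.prod
  have hMemEc : MemF Ec :=
    Summable.of_nonneg_of_le (fun p => norm_nonneg _) hptwE hMaj
  have hFEc : (∑' p : ℕ × ℕ, ‖Ec p.1 p.2‖) ≤
      (∑' k : ℤ, |(k : ℝ)| * ‖a k‖) * (∑' k : ℤ, |(k : ℝ)| * ‖b k‖) +
      (∑' k : ℤ, ‖a k‖) * (∑' p : ℕ × ℕ, ‖Eb p.1 p.2‖) +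
      (∑' p : ℕ × ℕ, ‖Ea p.1 p.2‖) * (∑' k : ℤ, ‖b k‖) +
      (∑' p : ℕ × ℕ, ‖Ea p.1 p.2‖) * ∑' p : ℕ × ℕ, ‖Eb p.1 p.2‖ := by
    refine le_trans (Summable.tsum_le_tsum hptwE hMemEc hMaj) ?_
    rw [Summable.tsum_add ((hWDs.prod.add hW2s.prod).add hW3s.prod) hW4s.prod,
      Summable.tsum_add (hWDs.prod.add hW2s.prod) hW3s.prod, Summable.tsum_add hWDs.prod hW2s.prod]
    exact add_le_add (add_le_add (add_le_add hMDt hM2t) hM3t) hM4t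
  refine ⟨Ec, hMemEc, fun i j => by simp only [hEcdef]; ring, ?_⟩
  have hA1 : (0 : ℝ) ≤ ∑' k : ℤ, ‖a k‖ := tsum_nonneg h0a
  have hA2 : (0 : ℝ) ≤ ∑' k : ℤ, |(k : ℝ)| * ‖a k‖ :=
    tsum_nonneg fun k => mul_nonneg (abs_nonneg _) (h0a k)
  have hB1 : (0 : ℝ) ≤ ∑' k : ℤ, ‖b k‖ := tsum_nonneg h0b
  have hB2 : (0 : ℝ) ≤ ∑' k : ℤ, |(k : ℝ)| * ‖b k‖ :=
    tsum_nonneg fun k => mul_nonneg (abs_nonneg _) (h0b k)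
  have hEA : (0 : ℝ) ≤ ∑' p : ℕ × ℕ, ‖Ea p.1 p.2‖ :=
    tsum_nonneg fun p => norm_nonneg _
  have hEB : (0 : ℝ) ≤ ∑' p : ℕ × ℕ, ‖Eb p.1 p.2‖ :=
    tsum_nonneg fun p => norm_nonneg _
  simp only [W1Norm, FNorm]
  nlinarith [hCt, hCt1, hFEc, mul_nonneg hA2 hEB, mul_nonneg hEA hB2,
    mul_nonneg hA1 hB1, mul_nonneg hA1 hB2, mul_nonneg hA2 hB1]

end
end

section
/- Let $a_i(z)=a_{i,-1}z^{-1}+a_{i,0}+a_{i,1}z$ for $i=-1,0,1$ be Laurent polynomials with real coefficients satisfying: $\sum_{i,j=-1}^1 a_{i,j}=0$; $a_{0,0}<0$; $a_{i,j}\ge0$ for all $(i,j)\ne(0,0)$; (i) $a_{-1,0}>0$ or $a_{1,0}>0$; (ii) $a_{i,j}\ne0$ for at least one pair $(i,j)$ with $j\ne0$. Then for every $z$ on the unit circle with $z\ne1$, the quadratic polynomial $p_z(x)=a_1(z)x^2+a_0(z)x+a_{-1}(z)$ has exactly one root of modulus less than 1 and one root of modulus greater than 1 (in particular no root of modulus 1).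 -/
noncomputable section

open Polynomial

open scoped Classical

private lemma unit_mul_conj (x : ℂ) (hx : ‖x‖ = 1) : x * (starRingEnd ℂ) x = 1 := by
  rw [Complex.mul_conj, Complex.normSq_eq_norm_sq, hx]; norm_num

private lemma unit_inv_eq_conj (z : ℂ) (hz : ‖z‖ = 1) : z⁻¹ = (starRingEnd ℂ) z :=
  inv_eq_of_mul_eq_one_right (unit_mul_conj z hz)

private lemma unit_sq (z : ℂ) (hz : ‖z‖ = 1) : z.re ^ 2 + z.im ^ 2 = 1 := by
  have h1 := Complex.sq_norm z
  rw [hz, Complex.normSq_apply] at h1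
  nlinarith [h1]

private lemma unit_re_lt_one (z : ℂ) (hz : ‖z‖ = 1) (hz1 : z ≠ 1) : z.re < 1 := by
  have h2 := unit_sq z hz
  rcases lt_or_eq_of_le (show z.re ≤ 1 by nlinarith [sq_nonneg z.im]) with h | h
  · exact h
  · have him : z.im ^ 2 = 0 := by nlinarith
    have him0 : z.im = 0 := by
      have := pow_eq_zero_iff (n := 2) (by norm_num) |>.mp him
      exact this
    exact absurd (Complex.ext h (by simpa using him0)) hz1

private lemma abs3 (a b c : ℝ) (ha : 0 ≤ a) (hb : 0 ≤ b) (hc : 0 ≤ c) (z : ℂ)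
    (hz : ‖z‖ = 1) : ‖(a:ℂ) * z⁻¹ + (b:ℂ) + (c:ℂ) * z‖ ≤ a + b + c := by
  have hzi : ‖z⁻¹‖ = 1 := by rw [norm_inv, hz, inv_one]
  calc ‖(a:ℂ) * z⁻¹ + (b:ℂ) + (c:ℂ) * z‖
      ≤ ‖(a:ℂ) * z⁻¹ + (b:ℂ)‖ + ‖(c:ℂ) * z‖ := norm_add_le _ _
    _ ≤ ‖(a:ℂ) * z⁻¹‖ + ‖(b:ℂ)‖ + ‖(c:ℂ) * z‖ := by
        gcongr; exact norm_add_le _ _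
    _ = a + b + c := by
        simp [norm_mul, Complex.norm_real, Real.norm_eq_abs, hz, hzi, abs_of_nonneg ha, abs_of_nonneg hb,
          abs_of_nonneg hc]

set_option maxHeartbeats 1000000 in
/-- Theorem on the roots of `p_z(x) = a₁(z)x² + a₀(z)x + a₋₁(z)` where
`aᵢ(z) = a_{i,-1}z⁻¹ + a_{i,0} + a_{i,1}z`: under the sign and irreducibility conditions,
for every `z` on the unit circle with `z ≠ 1`, `p_z` has no root of modulus 1 and exactly
one root (with multiplicity) of modulus less than 1; every other root has modulus
greater than 1 (a "root at infinity" occurring when `a₁(z) = 0`). -/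
theorem stmt17
    (am1m1 am10 am11 a0m1 a00 a01 a1m1 a10 a11 : ℝ)
    (hsum : am1m1 + am10 + am11 + a0m1 + a00 + a01 + a1m1 + a10 + a11 = 0)
    (h00 : a00 < 0)
    (hpos : 0 ≤ am1m1 ∧ 0 ≤ am10 ∧ 0 ≤ am11 ∧ 0 ≤ a0m1 ∧ 0 ≤ a01 ∧
      0 ≤ a1m1 ∧ 0 ≤ a10 ∧ 0 ≤ a11)
    (hi : 0 < am10 ∨ 0 < a10)
    (hii : am1m1 ≠ 0 ∨ am11 ≠ 0 ∨ a0m1 ≠ 0 ∨ a01 ≠ 0 ∨ a1m1 ≠ 0 ∨ a11 ≠ 0)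
    (z : ℂ) (hz : ‖z‖ = 1) (hz1 : z ≠ 1) :
    let am1z : ℂ := (am1m1 : ℂ) * z⁻¹ + (am10 : ℂ) + (am11 : ℂ) * z
    let a0z : ℂ := (a0m1 : ℂ) * z⁻¹ + (a00 : ℂ) + (a01 : ℂ) * z
    let a1z : ℂ := (a1m1 : ℂ) * z⁻¹ + (a10 : ℂ) + (a11 : ℂ) * z
    let p : ℂ[X] := C a1z * X ^ 2 + C a0z * X + C am1z
    (∀ x : ℂ, p.IsRoot x → ‖x‖ ≠ 1) ∧
    Multiset.card (p.roots.filter fun x => ‖x‖ < 1) = 1 ∧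
    (∀ x ∈ p.roots.filter fun x => ¬ ‖x‖ < 1, 1 < ‖x‖) := by
  intro am1z a0z a1z p
  obtain ⟨hm1m1, hm10, hm11, h0m1, h01, h1m1, h10, h11⟩ := hpos
  have hzinv : z⁻¹ = (starRingEnd ℂ) z := unit_inv_eq_conj z hz
  have hz2 : z.re ^ 2 + z.im ^ 2 = 1 := unit_sq z hz
  have hzr : z.re < 1 := unit_re_lt_one z hz hz1
  -- Step: no root on the unit circle
  have key0 : ∀ x : ℂ, ‖x‖ = 1 → a1z * x ^ 2 + a0z * x + am1z ≠ 0 := by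
    intro x hx h
    have hxc : x * (starRingEnd ℂ) x = 1 := unit_mul_conj x hx
    have hx2 : x.re ^ 2 + x.im ^ 2 = 1 := unit_sq x hx
    have hE : am1z * (starRingEnd ℂ) x + a0z + a1z * x = 0 := by
      linear_combination (starRingEnd ℂ) x * h + (-(a1z * x) - a0z) * hxc
    simp only [am1z, a0z, a1z, hzinv] at hE
    have hRe := congrArg Complex.re hE
    simp only [Complex.add_re, Complex.mul_re, Complex.ofReal_re, Complex.ofReal_im,
      Complex.conj_re, Complex.conj_im, Complex.zero_re, Complex.add_im, Complex.mul_im,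
      Complex.zero_im] at hRe
    set xr := x.re; set xi := x.im; set zr := z.re; set zi := z.im
    have t1 : xr * zr - xi * zi ≤ 1 := by nlinarith [sq_nonneg (xr - zr), sq_nonneg (xi + zi)]
    have t3 : xr * zr + xi * zi ≤ 1 := by nlinarith [sq_nonneg (xr - zr), sq_nonneg (xi - zi)]
    have t2 : xr ≤ 1 := by nlinarith [sq_nonneg xi]
    have hsum0 : (am1m1 + a11) * (1 - (xr * zr - xi * zi)) + (am10 + a10) * (1 - xr)
        + (am11 + a1m1) * (1 - (xr * zr + xi * zi)) + (a0m1 + a01) * (1 - zr) = 0 := by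
      linear_combination hsum - hRe
    clear hRe hE h hxc
    have n1 : 0 ≤ (am1m1 + a11) * (1 - (xr * zr - xi * zi)) :=
      mul_nonneg (by linarith) (by linarith)
    have n3 : 0 ≤ (am11 + a1m1) * (1 - (xr * zr + xi * zi)) :=
      mul_nonneg (by linarith) (by linarith)
    have n4 : 0 ≤ (a0m1 + a01) * (1 - zr) := mul_nonneg (by linarith) (by linarith)
    have n2 : 0 ≤ (am10 + a10) * (1 - xr) := mul_nonneg (by linarith) (by linarith)
    -- the middle coefficient is positive, hence xr = 1, xi = 0
    have hco : 0 < am10 + a10 := by rcases hi with h' | h' <;> linarith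
    have e2 : (am10 + a10) * (1 - xr) = 0 := by linarith
    have hxr1 : xr = 1 := by
      rcases mul_eq_zero.mp e2 with h' | h'
      · linarith
      · linarith
    have hxisq : xi ^ 2 = 0 := by rw [hxr1] at hx2; linarith [hx2]
    have hxi0 : xi = 0 := pow_eq_zero_iff (n := 2) (by norm_num) |>.mp hxisq
    rw [hxr1, hxi0] at hsum0
    have hQ : (am1m1 + a11 + am11 + a1m1 + a0m1 + a01) * (1 - zr) = 0 := by
      linear_combination hsum0
    have hc : 0 < am1m1 + a11 + am11 + a1m1 + a0m1 + a01 := by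
      rcases hii with h' | h' | h' | h' | h' | h'
      · have := lt_of_le_of_ne hm1m1 (Ne.symm h'); linarith
      · have := lt_of_le_of_ne hm11 (Ne.symm h'); linarith
      · have := lt_of_le_of_ne h0m1 (Ne.symm h'); linarith
      · have := lt_of_le_of_ne h01 (Ne.symm h'); linarith
      · have := lt_of_le_of_ne h1m1 (Ne.symm h'); linarith
      · have := lt_of_le_of_ne h11 (Ne.symm h'); linarith
    nlinarith [mul_pos hc (show (0:ℝ) < 1 - zr by linarith)]
  -- Step: |a0z| ≥ |a1z| + |am1z|, and a0z ≠ 0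
  have h0re : a0z.re = a00 + (a0m1 + a01) * z.re := by
    simp only [a0z, hzinv]
    simp only [Complex.add_re, Complex.mul_re, Complex.ofReal_re, Complex.ofReal_im,
      Complex.conj_re, Complex.conj_im]
    ring
  have hM : am1m1 + am10 + am11 + a1m1 + a10 + a11 ≤ ‖a0z‖ := by
    have h2 := Complex.abs_re_le_norm a0z
    have h3 : (a0m1 + a01) * z.re ≤ a0m1 + a01 := by nlinarith
    have h4 : am1m1 + am10 + am11 + a1m1 + a10 + a11 ≤ -a0z.re := by
      rw [h0re]; linarith
    calc am1m1 + am10 + am11 + a1m1 + a10 + a11 ≤ -a0z.re := h4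
      _ ≤ |a0z.re| := neg_le_abs a0z.re
      _ ≤ ‖a0z‖ := h2
  have habs1 : ‖a1z‖ ≤ a1m1 + a10 + a11 := abs3 _ _ _ h1m1 h10 h11 z hz
  have habsm1 : ‖am1z‖ ≤ am1m1 + am10 + am11 := abs3 _ _ _ hm1m1 hm10 hm11 z hz
  have key1 : ‖a1z‖ + ‖am1z‖ ≤ ‖a0z‖ := by linarith
  have ha0pos : 0 < ‖a0z‖ := by
    rcases hi with h' | h' <;>
      [linarith [norm_nonneg a1z, norm_nonneg am1z];
       linarith [norm_nonneg a1z, norm_nonneg am1z]]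
  have ha0 : a0z ≠ 0 := by
    intro h; rw [h] at ha0pos; simp at ha0pos
  -- bullet 1
  have bullet1 : ∀ x : ℂ, p.IsRoot x → ‖x‖ ≠ 1 := by
    intro x hr hx
    apply key0 x hx
    simpa [p, IsRoot, eval_add, eval_mul, eval_pow, eval_C, eval_X] using hr
  have hp0 : p ≠ 0 := by
    intro h
    apply ha0
    have := congrArg (fun q : ℂ[X] => q.coeff 1) h
    simpa [p, coeff_add, coeff_C_mul, coeff_C, coeff_X, coeff_X_pow] using this
  have bullet3 : ∀ x ∈ p.roots.filter (fun x => ¬ ‖x‖ < 1), 1 < ‖x‖ := by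
    intro x hx
    rw [Multiset.mem_filter] at hx
    obtain ⟨hmem, hnlt⟩ := hx
    have hroot := (Polynomial.mem_roots'.mp hmem).2
    exact lt_of_le_of_ne (not_lt.mp hnlt) (Ne.symm (bullet1 x hroot))
  refine ⟨bullet1, ?_, bullet3⟩
  by_cases ha1 : a1z = 0
  · -- linear case
    set r : ℂ := -(am1z / a0z) with hr
    have hdiv : a0z * (am1z / a0z) = am1z := by field_simp
    have hpeq : p = C a0z * (X - C r) := by
      simp only [p, ha1, map_zero, zero_mul, zero_add, hr, C_neg, sub_neg_eq_add]
      rw [mul_add, ← C_mul, hdiv]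
    have hroots : p.roots = {r} := by
      rw [hpeq, roots_C_mul _ ha0, roots_X_sub_C]
    have ha1abs : ‖a1z‖ = 0 := by rw [ha1]; simp
    have hrle : ‖r‖ ≤ 1 := by
      rw [hr, norm_neg, norm_div]
      rw [div_le_one ha0pos]
      linarith
    have hrroot : p.IsRoot r := by
      rw [hpeq]; simp
    have hrlt : ‖r‖ < 1 := lt_of_le_of_ne hrle (bullet1 r hrroot)
    rw [hroots]
    rw [Multiset.filter_singleton, if_pos hrlt]
    rfl
  · -- quadratic case
    have hdeg : p.natDegree = 2 := natDegree_quadratic ha1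
    have hsplits : Splits p := IsAlgClosed.splits p
    have hcard : Multiset.card p.roots = 2 := by
      rw [splits_iff_card_roots] at hsplits
      rw [hsplits, hdeg]
    obtain ⟨r, s, hrs⟩ := Multiset.card_eq_two.mp hcard
    have hlead : p.leadingCoeff = a1z := leadingCoeff_quadratic ha1
    have hfact : p = C a1z * ((X - C r) * (X - C s)) := by
      have hf := (IsAlgClosed.splits p).eq_prod_roots
      rw [hrs, hlead] at hf
      simpa using hf
    have h0 : am1z = a1z * (r * s) := by
      have h' := congrArg (eval 0) hfact
      simp only [p, eval_add, eval_mul, eval_pow, eval_C, eval_X, eval_sub] at h'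
      linear_combination h'
    have h1' : a0z = -(a1z * (r + s)) := by
      have e1 := congrArg (eval 1) hfact
      have e2 := congrArg (eval (-1)) hfact
      simp only [p, eval_add, eval_mul, eval_pow, eval_C, eval_X, eval_sub, eval_neg,
        eval_one] at e1 e2
      linear_combination (e1 - e2) / 2
    have hrroot : p.IsRoot r := by rw [hfact]; simp [IsRoot]
    have hsroot : p.IsRoot s := by rw [hfact]; simp [IsRoot]
    have hr1 : ‖r‖ ≠ 1 := bullet1 r hrroot
    have hs1 : ‖s‖ ≠ 1 := bullet1 s hsroot
    have ha1pos : 0 < ‖a1z‖ := norm_pos_iff.mpr ha1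
    have habs0 : ‖a0z‖ ≤ ‖a1z‖ * (‖r‖ + ‖s‖) := by
      rw [h1']
      calc ‖-(a1z * (r + s))‖ = ‖a1z‖ * ‖r + s‖ := by
            rw [norm_neg, norm_mul]
        _ ≤ _ := mul_le_mul_of_nonneg_left (norm_add_le r s) (norm_nonneg _)
    have habsm : ‖am1z‖ = ‖a1z‖ * (‖r‖ * ‖s‖) := by
      rw [h0, norm_mul, norm_mul]
    have hineq : 1 + ‖r‖ * ‖s‖ ≤ ‖r‖ + ‖s‖ := by
      have hk := key1
      rw [habsm] at hk
      have h2 : ‖a1z‖ * (1 + ‖r‖ * ‖s‖) ≤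
          ‖a1z‖ * (‖r‖ + ‖s‖) := by nlinarith [habs0]
      exact (mul_le_mul_iff_right₀ ha1pos).mp h2
    have hRn : 0 ≤ ‖r‖ := norm_nonneg r
    have hSn : 0 ≤ ‖s‖ := norm_nonneg s
    have key2 : (‖r‖ < 1 ∧ 1 < ‖s‖) ∨
        (‖s‖ < 1 ∧ 1 < ‖r‖) := by
      rcases lt_or_gt_of_ne hr1 with h' | h' <;> rcases lt_or_gt_of_ne hs1 with h'' | h''
      · exfalso; nlinarith
      · exact Or.inl ⟨h', h''⟩
      · exact Or.inr ⟨h'', h'⟩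
      · exfalso; nlinarith
    rw [hrs]
    rw [show ({r, s} : Multiset ℂ) = r ::ₘ {s} from rfl]
    rcases key2 with ⟨hlt, hgt⟩ | ⟨hlt, hgt⟩
    · simp only [Multiset.filter_cons, Multiset.filter_singleton]
      rw [if_pos hlt, if_neg (not_lt.mpr hgt.le)]
      rfl
    · simp only [Multiset.filter_cons, Multiset.filter_singleton]
      rw [if_neg (not_lt.mpr hgt.le), if_pos hlt]
      rfl

end
end
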